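/- arXiv:1409.2218 — 10 statements merged into one kernel-verified Lean document; each statement's English description precedes it below -/
import Mathlib

section
/- Let p be a prime number and S = {p}. For an integer n ≥ 3, there exist S-units u_1, …, u_n such that u_1 + ⋯ + u_n = 0, no nonempty proper subfamily of the u_i sums to 0, and u_i + u_{i+1} + ⋯ + u_j is not an S-unit for all 1 ≤ i < j ≤ n with (i, j) ∉ {(1, n−1), (2, n)}, if and only if n ≡ 2 (mod p − 1). (Equivalently: the S-unit graph has a nondegenerate induced cycle of length n if and only if n ≡ 2 (mod p − 1).) -/
/-- A rational number `u` is an `S`-unit if `u ≠ 0` and every prime dividing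
its numerator or its denominator (in lowest terms) lies in `S`. -/
def IsSUnit (S : Finset ℕ) (u : ℚ) : Prop :=
  u ≠ 0 ∧ ∀ p : ℕ, p.Prime → ((p : ℤ) ∣ u.num ∨ p ∣ u.den) → p ∈ S

namespace SUnitAux

lemma isSUnit_intCast_pow {p : ℕ} (hp : p.Prime) (e : ℕ) :
    IsSUnit {p} (((p : ℤ) ^ e : ℤ) : ℚ) := by
  constructor
  · simp [pow_ne_zero, hp.ne_zero]
  · intro q hq hdvd
    simp only [Finset.mem_singleton]
    rcases hdvd with h | h
    · rw [Rat.num_intCast] at h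
      have h' : q ∣ p ^ e := by exact_mod_cast h
      exact (Nat.prime_dvd_prime_iff_eq hq hp).mp (hq.dvd_of_dvd_pow h')
    · rw [Rat.den_intCast] at h
      exact absurd (Nat.le_of_dvd one_pos h) hq.one_lt.not_ge

lemma isSUnit_neg {S : Finset ℕ} {u : ℚ} (h : IsSUnit S u) : IsSUnit S (-u) := by
  obtain ⟨h0, h1⟩ := h
  refine ⟨neg_ne_zero.mpr h0, fun q hq hd => h1 q hq ?_⟩
  rcases hd with h | h
  · left
    have : (-u).num = -u.num := by simp
    rw [this] at h; exact (dvd_neg).mp h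
  · right
    have : (-u).den = u.den := by simp
    rwa [this] at h

lemma not_isSUnit_zero (S : Finset ℕ) : ¬ IsSUnit S 0 := fun h => h.1 rfl

lemma not_isSUnit_of_factor {p : ℕ} (hp : p.Prime) {m m' : ℤ} {a : ℕ}
    (hm : m = (p:ℤ) ^ a * m') (h1 : ¬ (p:ℤ) ∣ m') (h2 : 2 ≤ m'.natAbs) :
    ¬ IsSUnit {p} ((m : ℤ) : ℚ) := by
  rintro ⟨-, hall⟩
  obtain ⟨q, hq, hqd⟩ := Nat.exists_prime_and_dvd (by omega : m'.natAbs ≠ 1)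
  have hq' : (q:ℤ) ∣ m' := Int.natAbs_dvd_natAbs.mp (by simpa using hqd)
  have hqm : (q:ℤ) ∣ m := hm ▸ dvd_mul_of_dvd_right hq' _
  have : q ∈ ({p} : Finset ℕ) := hall q hq (Or.inl (by rwa [Rat.num_intCast]))
  rw [Finset.mem_singleton] at this
  subst this
  exact h1 hq'

lemma pow_of_prime_divisors {p m : ℕ} (hp : p.Prime) (hm : m ≠ 0)
    (h : ∀ d : ℕ, d.Prime → d ∣ m → d = p) : ∃ a : ℕ, m = p ^ a :=
  ⟨m.primeFactorsList.length, Nat.eq_prime_pow_of_unique_prime_dvd hm (fun hd hdvd => h _ hd hdvd)⟩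

lemma exists_pow_of_isSUnit {p : ℕ} (hp : p.Prime) {u : ℚ} (h : IsSUnit {p} u) :
    ∃ a b : ℕ, u = (p:ℚ)^a / (p:ℚ)^b ∨ u = -((p:ℚ)^a / (p:ℚ)^b) := by
  obtain ⟨h0, hall⟩ := h
  obtain ⟨a, ha⟩ := pow_of_prime_divisors hp (Int.natAbs_ne_zero.mpr (Rat.num_ne_zero.mpr h0))
    (fun d hd hdvd => Finset.mem_singleton.mp
      (hall d hd (Or.inl ((Int.natCast_dvd_natCast.mpr hdvd).trans (Int.natAbs_dvd.mpr dvd_rfl)))))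
  obtain ⟨b, hb⟩ := pow_of_prime_divisors hp u.den_nz
    (fun d hd hdvd => Finset.mem_singleton.mp (hall d hd (Or.inr hdvd)))
  refine ⟨a, b, ?_⟩
  have hden : (u.den : ℚ) = (p:ℚ)^b := by exact_mod_cast congrArg (Nat.cast : ℕ → ℚ) hb
  rcases Int.natAbs_eq u.num with hnum | hnum
  · left
    rw [← Rat.num_div_den u, hden, hnum, ha]
    push_cast; ring
  · right
    rw [← Rat.num_div_den u, hden, hnum, ha]
    push_cast; ring

lemma le_of_le_cons {α : Type*} [DecidableEq α] {a : α} {s t : Multiset α}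
    (h : s ≤ a ::ₘ t) (ha : a ∉ s) : s ≤ t := by
  rw [Multiset.le_iff_count] at h ⊢
  intro x
  have hx := h x
  rw [Multiset.count_cons] at hx
  by_cases hxa : x = a
  · simp [hxa, Multiset.count_eq_zero_of_notMem ha]
  · simpa [hxa] using hx

lemma exists_le_of_le_map {α β : Type*} [DecidableEq α] [DecidableEq β] (f : α → β) :
    ∀ (s : Multiset α) (N : Multiset β), N ≤ s.map f → ∃ t, t ≤ s ∧ t.map f = N := by
  intro s
  induction s using Multiset.induction with
  | empty =>
    intro N h
    simp only [Multiset.map_zero, Multiset.le_zero] at h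
    exact ⟨0, le_rfl, by simp [h]⟩
  | cons a s ih =>
    intro N h
    rw [Multiset.map_cons] at h
    by_cases hfa : f a ∈ N
    · have h2 : N.erase (f a) ≤ s.map f := by
        have := Multiset.erase_le_erase (f a) h
        rwa [Multiset.erase_cons_head] at this
      obtain ⟨t, ht, hte⟩ := ih _ h2
      exact ⟨a ::ₘ t, Multiset.cons_le_cons _ ht,
        by rw [Multiset.map_cons, hte, Multiset.cons_erase hfa]⟩
    · obtain ⟨t, ht, hte⟩ := ih _ (le_of_le_cons h hfa)
      exact ⟨t, ht.trans (Multiset.le_cons_self _ _), hte⟩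


theorem key {p : ℕ} (hp : p.Prime) :
    ∀ c (M : Multiset ℤ), M.card = c → M ≠ 0 →
    (∀ x ∈ M, ∃ e : ℕ, x = (p:ℤ)^e ∨ x = -((p:ℤ)^e)) →
    M.sum = 0 →
    (∀ N, N ≤ M → N ≠ 0 → N ≠ M → N.sum ≠ 0) →
    M.card ≡ 2 [MOD p-1] := by
  intro c
  induction c using Nat.strong_induction_on with
  | _ c IH =>
  intro M hc hM0 H1 H2 H3
  have hp1 : 1 < p := hp.one_lt
  have hnz : ∀ x ∈ M, x ≠ 0 := by
    intro x hx
    obtain ⟨e, he | he⟩ := H1 x hx <;> subst he <;> simp [pow_ne_zero, hp.ne_zero]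
  rcases lt_or_ge M.card 3 with hcard | hcard
  · have hne : M.card ≠ 0 := by simpa [Multiset.card_eq_zero] using hM0
    have h12 : M.card = 1 ∨ M.card = 2 := by omega
    rcases h12 with h | h
    · obtain ⟨x, hx⟩ := Multiset.card_eq_one.mp h
      rw [hx] at H2; simp at H2
      exact absurd H2 (hnz x (by simp [hx]))
    · rw [h]
  · -- main case
    obtain ⟨x₀, hx₀M', hx₀min'⟩ := Finset.exists_min_image M.toFinset Int.natAbs
      (by rw [Multiset.toFinset_nonempty]; exact hM0)
    rw [Multiset.mem_toFinset] at hx₀M'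
    have hx₀min : ∀ y ∈ M, x₀.natAbs ≤ y.natAbs := fun y hy => hx₀min' y (Multiset.mem_toFinset.mpr hy)
    have hx₀ne : x₀ ≠ 0 := hnz x₀ hx₀M'
    -- opposite not in M
    have hopp : -x₀ ∉ M := by
      intro hmem
      have hne2 : x₀ ≠ -x₀ := by intro h; apply hx₀ne; omega
      have hle : ({x₀, -x₀} : Multiset ℤ) ≤ M := by
        rw [Multiset.le_iff_count]
        intro x
        by_cases h1 : x = x₀
        · subst h1
          have : 1 ≤ Multiset.count x M := Multiset.one_le_count_iff_mem.mpr hx₀M'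
          simpa [Multiset.count_cons, Multiset.count_singleton, hne2] using this
        · by_cases h2 : x = -x₀
          · subst h2
            have : 1 ≤ Multiset.count (-x₀) M := Multiset.one_le_count_iff_mem.mpr hmem
            simpa [Multiset.count_cons, Multiset.count_singleton, Ne.symm hne2] using this
          · simp [Multiset.count_cons, Multiset.count_singleton, h1, h2]
      have hNM : ({x₀, -x₀} : Multiset ℤ) ≠ M := by
        intro h
        rw [← h] at hcard
        simp [Multiset.card_cons] at hcard
      exact H3 _ hle (by simp) hNM (by simp)
    -- elements of minimal absolute value all equal x₀
    set T := M.filter (fun y => y.natAbs = x₀.natAbs) with hT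
    set Tc := M.filter (fun y => ¬ y.natAbs = x₀.natAbs) with hTc
    have hMsplit : T + Tc = M := Multiset.filter_add_not _ M
    have hTrep : T = Multiset.replicate T.card x₀ := by
      rw [Multiset.eq_replicate_card]
      intro y hy
      rw [hT, Multiset.mem_filter] at hy
      obtain ⟨hyM, hyabs⟩ := hy
      rcases Int.natAbs_eq_natAbs_iff.mp hyabs with h | h
      · exact h
      · exact absurd (h ▸ hyM) (by simpa using hopp)
    have hx₀T : x₀ ∈ T := Multiset.mem_filter.mpr ⟨hx₀M', rfl⟩
    have hTcard1 : 1 ≤ T.card := Multiset.card_pos_iff_exists_mem.mpr ⟨x₀, hx₀T⟩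
    have hdvd : ∀ y ∈ Tc, (p:ℤ) * x₀ ∣ y := by
      intro y hy
      rw [hTc, Multiset.mem_filter] at hy
      obtain ⟨hyM, hyne⟩ := hy
      obtain ⟨e, he⟩ := H1 y hyM
      obtain ⟨d, hd⟩ := H1 x₀ hx₀M'
      have habsx : x₀.natAbs = p^d := by rcases hd with h|h <;> subst h <;> simp [Int.natAbs_pow]
      have habsy : y.natAbs = p^e := by rcases he with h|h <;> subst h <;> simp [Int.natAbs_pow]
      have hlt : p^d < p^e := by
        refine lt_of_le_of_ne ?_ ?_
        · rw [← habsx, ← habsy]; exact hx₀min y hyM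
        · intro h; exact hyne (by rw [habsy, habsx, h])
      have hde : d + 1 ≤ e := (pow_lt_pow_iff_right₀ hp1).mp hlt
      have h1 : ((p:ℤ))^(d+1) ∣ (p:ℤ)^e := pow_dvd_pow _ hde
      have h2 : ((p:ℤ))^(d+1) ∣ y := by
        rcases he with h|h <;> subst h
        · exact h1
        · exact (dvd_neg).mpr h1
      rcases hd with h|h <;> subst h
      · rwa [show (p:ℤ) * (p:ℤ)^d = (p:ℤ)^(d+1) from by ring]
      · rw [show (p:ℤ) * (-((p:ℤ)^d)) = -((p:ℤ)^(d+1)) from by ring]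
        exact (neg_dvd).mpr h2
    have hsumTc : (p:ℤ) * x₀ ∣ Tc.sum := Multiset.dvd_sum hdvd
    have hsumT : T.sum = (T.card : ℤ) * x₀ := by
      rw [hTrep]
      simp [Multiset.sum_replicate, nsmul_eq_mul]
    have hsum0 : T.sum + Tc.sum = 0 := by rw [← Multiset.sum_add, hMsplit]; exact H2
    have hdvd2 : (p:ℤ) * x₀ ∣ (T.card : ℤ) * x₀ := by
      have h : (T.card : ℤ) * x₀ = -Tc.sum := by rw [← hsumT]; linarith
      rw [h]; exact (dvd_neg).mpr hsumTc
    have hpm : (p:ℤ) ∣ (T.card : ℤ) := by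
      obtain ⟨k, hk⟩ := hdvd2
      refine ⟨k, mul_right_cancel₀ hx₀ne ?_⟩
      rw [hk]; ring
    have hpm' : p ∣ T.card := Int.ofNat_dvd.mp (by exact_mod_cast hpm)
    have hTcard : p ≤ T.card := Nat.le_of_dvd (by omega) hpm'
    have hrep_le : Multiset.replicate p x₀ ≤ M := by
      refine le_trans ?_ (hMsplit ▸ (Multiset.le_add_right T Tc) : T ≤ M)
      rw [hTrep]
      exact Multiset.replicate_le_replicate x₀ |>.mpr hTcard
    set R := M - Multiset.replicate p x₀ with hR
    have hMR : M = Multiset.replicate p x₀ + R := by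
      rw [hR, add_comm]
      exact (tsub_add_cancel_of_le hrep_le).symm
    set M₂ := ((p:ℤ) * x₀) ::ₘ R with hM₂
    have hcardM : M.card = p + R.card := by
      conv_lhs => rw [hMR]
      simp
    have hcardM₂ : M₂.card = R.card + 1 := by simp [hM₂]
    have hRM : R ≤ M := tsub_le_self
    have H1₂ : ∀ x ∈ M₂, ∃ e : ℕ, x = (p:ℤ)^e ∨ x = -((p:ℤ)^e) := by
      intro x hx
      rcases Multiset.mem_cons.mp hx with h | h
      · obtain ⟨d, hd⟩ := H1 x₀ hx₀M'
        refine ⟨d+1, ?_⟩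
        rcases hd with h'|h' <;> subst h' <;> rw [h]
        · left; ring
        · right; ring
      · exact H1 x (Multiset.mem_of_le hRM h)
    have H2₂ : M₂.sum = 0 := by
      have : M.sum = (p:ℤ) * x₀ + R.sum := by
        conv_lhs => rw [hMR]
        rw [Multiset.sum_add, Multiset.sum_replicate, nsmul_eq_mul]
      rw [hM₂, Multiset.sum_cons, ← this, H2]
    have H3₂ : ∀ N, N ≤ M₂ → N ≠ 0 → N ≠ M₂ → N.sum ≠ 0 := by
      intro N hN hN0 hNM₂ hNsum
      by_cases hx : ((p:ℤ) * x₀) ∈ N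
      · set N' := N.erase ((p:ℤ) * x₀) with hN'
        have hNcons : N = ((p:ℤ) * x₀) ::ₘ N' := (Multiset.cons_erase hx).symm
        have hN'R : N' ≤ R := by
          have := Multiset.erase_le_erase ((p:ℤ) * x₀) hN
          rwa [hM₂, Multiset.erase_cons_head] at this
        have hle : Multiset.replicate p x₀ + N' ≤ M := by
          rw [hMR]; exact add_le_add_right hN'R _
        have hmem0 : x₀ ∈ Multiset.replicate p x₀ + N' :=
          Multiset.mem_add.mpr (Or.inl (Multiset.mem_replicate.mpr ⟨by omega, rfl⟩))
        refine H3 _ hle (fun h0 => by rw [h0] at hmem0; simp at hmem0) ?_ ?_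
        · intro h
          apply hNM₂
          have : N' = R := by
            have h2 : Multiset.replicate p x₀ + N' = Multiset.replicate p x₀ + R := h.trans hMR
            exact add_left_cancel h2
          rw [hNcons, this, hM₂]
        · rw [Multiset.sum_add, Multiset.sum_replicate, nsmul_eq_mul]
          have : N.sum = (p:ℤ) * x₀ + N'.sum := by rw [hNcons, Multiset.sum_cons]
          rw [← this]; exact hNsum
      · have hNR : N ≤ R := le_of_le_cons (hM₂ ▸ hN) hx
        have hNM : N ≠ M := by
          intro h
          have := Multiset.card_le_card hNR
          rw [h, hcardM] at this
          omega
        exact H3 _ (hNR.trans hRM) hN0 hNM hNsum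
    have hM₂0 : M₂ ≠ 0 := by simp [hM₂]
    have hIH := IH M₂.card (by omega) M₂ rfl hM₂0 H1₂ H2₂ H3₂
    have heq : M.card = M₂.card + (p-1) := by omega
    show M.card % (p-1) = 2 % (p-1)
    rw [heq, Nat.add_mod_right]
    exact hIH


def hseq (p t : ℕ) : ℤ := ((t % (p-1) + 1 : ℕ) : ℤ) * (p:ℤ)^(t/(p-1)) - 1

def Xseq (p k n i : ℕ) : ℤ := if 2 ≤ i ∧ i ≤ n then (p:ℤ)^k - hseq p (i-2) else 0

lemma hseq_zero (p : ℕ) : hseq p 0 = 0 := by simp [hseq]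

lemma hseq_top {p : ℕ} (hp2 : 2 ≤ p) (k : ℕ) : hseq p (k*(p-1)) = (p:ℤ)^k - 1 := by
  unfold hseq
  rw [Nat.mul_mod_left, Nat.mul_div_cancel k (by omega : 0 < p - 1)]
  simp

lemma hseq_diff {p : ℕ} (hp2 : 2 ≤ p) (t : ℕ) :
    hseq p (t+1) - hseq p t = (p:ℤ)^(t/(p-1)) := by
  set L := p - 1 with hL
  have hL0 : 0 < L := by omega
  set q := t / L with hq
  set r := t % L with hr
  have hrL : r < L := Nat.mod_lt t hL0
  have ht : L * q + r = t := Nat.div_add_mod t L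
  by_cases hcase : r + 1 < L
  · have hdiv : (t+1)/L = q := by
      rw [← ht, show L * q + r + 1 = L * q + (r+1) from rfl, Nat.mul_add_div hL0,
        Nat.div_eq_of_lt hcase, Nat.add_zero]
    have hmod : (t+1)%L = r+1 := by
      rw [← ht, show L * q + r + 1 = L * q + (r+1) from rfl, Nat.mul_add_mod,
        Nat.mod_eq_of_lt hcase]
    unfold hseq
    rw [← hL, ← hq, ← hr, hdiv, hmod]
    push_cast
    ring
  · have hcase' : r + 1 = L := by omega
    have ht' : t + 1 = L * (q + 1) := by
      have hexp : L * (q + 1) = L * q + L := by ring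
      omega
    have hdiv : (t+1)/L = q+1 := by rw [ht', Nat.mul_div_cancel_left _ hL0]
    have hmod : (t+1)%L = 0 := by rw [ht', Nat.mul_mod_right]
    unfold hseq
    rw [← hL, ← hq, ← hr, hdiv, hmod]
    have hcast : (((r+1 : ℕ)) : ℤ) = (p : ℤ) - 1 := by omega
    rw [hcast]
    push_cast
    ring

lemma not_isSUnit_hdiff {p : ℕ} (hp : p.Prime) {a b : ℕ} (hab : a + 2 ≤ b) :
    ¬ IsSUnit {p} ((hseq p a - hseq p b : ℤ) : ℚ) := by
  have hp2 : 2 ≤ p := hp.two_le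
  set L := p - 1 with hL
  have hL0 : 0 < L := by omega
  set qa := a / L with hqa; set ra := a % L with hra
  set qb := b / L with hqb; set rb := b % L with hrb
  have hraL : ra < L := Nat.mod_lt a hL0
  have hrbL : rb < L := Nat.mod_lt b hL0
  have ha : L * qa + ra = a := Nat.div_add_mod a L
  have hb : L * qb + rb = b := Nat.div_add_mod b L
  have hqab : qa ≤ qb := Nat.div_le_div_right (by omega)
  set d := qb - qa with hd
  have hqbd : qb = qa + d := by omega
  have hpow : (p:ℤ)^qb = (p:ℤ)^qa * (p:ℤ)^d := by rw [hqbd, pow_add]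
  set m' : ℤ := ((ra:ℤ)+1) - ((rb:ℤ)+1) * (p:ℤ)^d with hm'
  have hm : hseq p a - hseq p b = (p:ℤ)^qa * m' := by
    unfold hseq
    rw [← hqa, ← hra, ← hqb, ← hrb, hpow, hm']
    push_cast
    ring
  have haz : ((L:ℕ):ℤ)*qa + ra = a := by exact_mod_cast ha
  have hbz : ((L:ℕ):ℤ)*qb + rb = b := by exact_mod_cast hb
  have habz : (a:ℤ) + 2 ≤ b := by exact_mod_cast hab
  have hLz : ((L:ℕ):ℤ) = (p:ℤ) - 1 := by
    have : (L:ℕ) = p - 1 := hL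
    omega
  refine not_isSUnit_of_factor hp hm ?_ ?_
  · intro hdvd
    by_cases hd0 : d = 0
    · have hq0 : ((L:ℕ):ℤ)*qb = ((L:ℕ):ℤ)*qa := by rw [hqbd, hd0]; ring_nf
      have hm'0 : m' = (a:ℤ) - b := by
        rw [hm', hd0, pow_zero]
        linarith
      have hdvd2 : (p:ℤ) ∣ ((b:ℤ) - a) := by
        have : (b:ℤ) - a = -m' := by rw [hm'0]; ring
        rw [this]
        exact dvd_neg.mpr hdvd
      have hle := Int.le_of_dvd (by linarith) hdvd2
      have hba : (b:ℤ) - a = (rb:ℤ) - ra := by linarith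
      have : (rb:ℤ) < (p:ℤ) - 1 := by exact_mod_cast (hLz ▸ (by exact_mod_cast hrbL : ((rb:ℕ):ℤ) < ((L:ℕ):ℤ)))
      linarith
    · have hd1 : 1 ≤ d := by omega
      have hppd : (p:ℤ) ∣ (p:ℤ)^d := dvd_pow_self _ hd0
      have hra1 : (p:ℤ) ∣ ((ra:ℤ)+1) := by
        have heq : ((ra:ℤ)+1) = m' + ((rb:ℤ)+1) * (p:ℤ)^d := by rw [hm']; ring
        rw [heq]
        exact dvd_add hdvd (Dvd.dvd.mul_left hppd _)
      have hle := Int.le_of_dvd (by positivity) hra1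
      have : (ra:ℤ) < (p:ℤ) - 1 := by
        have h1 : ((ra:ℕ):ℤ) < ((L:ℕ):ℤ) := by exact_mod_cast hraL
        linarith [hLz ▸ h1]
      linarith
  · by_contra hcon
    push_neg at hcon
    have hcon' : -1 ≤ m' ∧ m' ≤ 1 := by omega
    by_cases hd0 : d = 0
    · have hq0 : ((L:ℕ):ℤ)*qb = ((L:ℕ):ℤ)*qa := by rw [hqbd, hd0]; ring_nf
      have hm'0 : m' = (a:ℤ) - b := by
        rw [hm', hd0, pow_zero]
        linarith
      omega
    · have hd1 : 1 ≤ d := by omega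
      have h2p : (2:ℤ) ≤ p := by exact_mod_cast hp2
      have hple : (p:ℤ) ≤ (p:ℤ)^d := by
        calc (p:ℤ) = (p:ℤ)^1 := (pow_one _).symm
        _ ≤ (p:ℤ)^d := pow_le_pow_right₀ (by linarith) hd1
      have hra2 : (ra:ℤ) + 2 ≤ p := by
        have h1 : ((ra:ℕ):ℤ) < ((L:ℕ):ℤ) := by exact_mod_cast hraL
        linarith [hLz ▸ h1]
      have hup : ((rb:ℤ)+1) * (p:ℤ)^d ≤ (ra:ℤ) + 2 := by
        have := hcon'.1
        rw [hm'] at this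
        linarith
      have hlow : (p:ℤ) ≤ ((rb:ℤ)+1) * (p:ℤ)^d := by
        have h0 : (1:ℤ) ≤ (rb:ℤ)+1 := by omega
        have h0' : (p:ℤ)^d ≤ ((rb:ℤ)+1) * (p:ℤ)^d := le_mul_of_one_le_left (by positivity) h0
        linarith
      have hXp : ((rb:ℤ)+1) * (p:ℤ)^d = p := le_antisymm (hup.trans hra2) hlow
      have hrap : (ra:ℤ) + 2 = p := le_antisymm hra2 (by linarith)
      have hrb0 : (rb:ℤ) = 0 := by
        by_contra h
        have h1 : (2:ℤ) ≤ (rb:ℤ)+1 := by omega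
        have h2 : 2 * (p:ℤ)^d ≤ ((rb:ℤ)+1) * (p:ℤ)^d :=
          mul_le_mul_of_nonneg_right h1 (by positivity)
        linarith
      have hpd : (p:ℤ)^d = p := by rw [hrb0] at hXp; linarith
      have hd1' : d = 1 := by
        by_contra h
        have hd2 : 2 ≤ d := by omega
        have h3 : (p:ℤ)^2 ≤ (p:ℤ)^d := pow_le_pow_right₀ (by linarith) hd2
        rw [hpd] at h3
        nlinarith
      have hq2 : ((L:ℕ):ℤ)*qb = ((L:ℕ):ℤ)*qa + ((L:ℕ):ℤ) := by
        rw [hqbd, hd1']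
        push_cast
        ring
      linarith

lemma V_facts {p : ℕ} (hp : p.Prime) {k t : ℕ} (hk : 1 ≤ k) (ht1 : 1 ≤ t)
    (ht2 : t < k*(p-1)) :
    ¬ (p:ℤ) ∣ ((p:ℤ)^k - hseq p t) ∧ 2 ≤ ((p:ℤ)^k - hseq p t).natAbs := by
  have hp2 : 2 ≤ p := hp.two_le
  have h2p : (2:ℤ) ≤ p := by exact_mod_cast hp2
  set L := p - 1 with hL
  have hL0 : 0 < L := by omega
  set q := t / L with hq; set r := t % L with hr
  have hrL : r < L := Nat.mod_lt t hL0
  have ht : L * q + r = t := Nat.div_add_mod t L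
  have hqk : q < k := Nat.div_lt_of_lt_mul (by rw [Nat.mul_comm]; exact ht2)
  have hVeq : (p:ℤ)^k - hseq p t = (p:ℤ)^k - ((r:ℤ)+1) * (p:ℤ)^q + 1 := by
    unfold hseq
    rw [← hq, ← hr]
    push_cast
    ring
  have hpk : (p:ℤ) ≤ (p:ℤ)^k := by
    calc (p:ℤ) = (p:ℤ)^1 := (pow_one _).symm
    _ ≤ (p:ℤ)^k := pow_le_pow_right₀ (by linarith) hk
  have hppk : (p:ℤ) ∣ (p:ℤ)^k := dvd_pow_self _ (by omega)
  by_cases hq0 : q = 0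
  · have hrt : r = t := by
      have hexp : L * q = 0 := by rw [hq0]; ring
      omega
    have hVeq' : (p:ℤ)^k - hseq p t = (p:ℤ)^k - (r:ℤ) := by
      rw [hVeq, hq0, pow_zero]; ring
    have hr1 : (1:ℤ) ≤ (r:ℤ) := by exact_mod_cast (hrt ▸ ht1)
    have hrp : (r:ℤ) ≤ (p:ℤ) - 2 := by
      have h1 : ((r:ℕ):ℤ) < ((L:ℕ):ℤ) := by exact_mod_cast hrL
      have hLz : ((L:ℕ):ℤ) = (p:ℤ) - 1 := by
        have : (L:ℕ) = p - 1 := hL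
        omega
      linarith [hLz ▸ h1]
    constructor
    · intro hdvd
      rw [hVeq'] at hdvd
      have : (p:ℤ) ∣ (r:ℤ) := by
        have heq : (r:ℤ) = (p:ℤ)^k - ((p:ℤ)^k - (r:ℤ)) := by ring
        rw [heq]
        exact dvd_sub hppk hdvd
      have := Int.le_of_dvd (by linarith) this
      linarith
    · have h2 : 2 ≤ (p:ℤ)^k - hseq p t := by rw [hVeq']; linarith
      omega
  · have hq1 : 1 ≤ q := Nat.one_le_iff_ne_zero.mpr hq0
    have hqk1 : q ≤ k - 1 := by omega
    have h1 : (p:ℤ)^q ≤ (p:ℤ)^(k-1) := pow_le_pow_right₀ (by linarith) hqk1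
    have h2 : ((r:ℤ)+1) ≤ (p:ℤ) - 1 := by
      have hx : ((r:ℕ):ℤ) < ((L:ℕ):ℤ) := by exact_mod_cast hrL
      have hLz : ((L:ℕ):ℤ) = (p:ℤ) - 1 := by
        have : (L:ℕ) = p - 1 := hL
        omega
      linarith [hLz ▸ hx]
    have h3 : ((r:ℤ)+1) * (p:ℤ)^q ≤ ((p:ℤ)-1) * (p:ℤ)^(k-1) := by
      apply mul_le_mul h2 h1 (by positivity) (by linarith)
    have h4 : (p:ℤ)^k = (p:ℤ) * (p:ℤ)^(k-1) := by
      rw [← pow_succ']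
      congr 1
      omega
    have h5 : (1:ℤ) ≤ (p:ℤ)^(k-1) := by
      have := pow_pos (show (0:ℤ) < p by linarith) (k-1)
      omega
    have hV2 : 2 ≤ (p:ℤ)^k - hseq p t := by
      rw [hVeq]
      nlinarith
    constructor
    · intro hdvd
      have hppq : (p:ℤ) ∣ ((r:ℤ)+1) * (p:ℤ)^q := Dvd.dvd.mul_left (dvd_pow_self _ (by omega)) _
      have h1d : (p:ℤ) ∣ 1 := by
        have heq : (1:ℤ) = ((p:ℤ)^k - hseq p t) - (p:ℤ)^k + ((r:ℤ)+1) * (p:ℤ)^q := by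
          rw [hVeq]; ring
        rw [heq]
        exact dvd_add (dvd_sub hdvd hppk) hppq
      have := Int.le_of_dvd one_pos h1d
      linarith
    · omega

lemma not_isSUnit_V {p : ℕ} (hp : p.Prime) {k t : ℕ} (hk : 1 ≤ k) (ht1 : 1 ≤ t)
    (ht2 : t < k*(p-1)) :
    ¬ IsSUnit {p} (((p:ℤ)^k - hseq p t : ℤ) : ℚ) := by
  obtain ⟨h1, h2⟩ := V_facts hp hk ht1 ht2
  exact not_isSUnit_of_factor hp
    (show ((p:ℤ)^k - hseq p t) = (p:ℤ)^0 * ((p:ℤ)^k - hseq p t) by rw [pow_zero, one_mul])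
    h1 h2

lemma not_isSUnit_V' {p : ℕ} (hp : p.Prime) {k t : ℕ} (hk : 1 ≤ k) (ht1 : 1 ≤ t)
    (ht2 : t < k*(p-1)) :
    ¬ IsSUnit {p} ((hseq p t - (p:ℤ)^k : ℤ) : ℚ) := by
  obtain ⟨h1, h2⟩ := V_facts hp hk ht1 ht2
  refine not_isSUnit_of_factor hp
    (show (hseq p t - (p:ℤ)^k) = (p:ℤ)^0 * (hseq p t - (p:ℤ)^k) by rw [pow_zero, one_mul])
    ?_ ?_
  · intro hdvd
    apply h1
    have heq : (p:ℤ)^k - hseq p t = -(hseq p t - (p:ℤ)^k) := by ring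
    rw [heq]
    exact dvd_neg.mpr hdvd
  · have heq : hseq p t - (p:ℤ)^k = -((p:ℤ)^k - hseq p t) := by ring
    rw [heq, Int.natAbs_neg]
    exact h2

lemma sum_tele (F : ℕ → ℚ) :
    ∀ (j i : ℕ), i ≤ j + 1 → ∑ t ∈ Finset.Icc i j, (F (t+1) - F t) = F (j+1) - F i := by
  intro j
  induction j with
  | zero =>
    intro i hi
    interval_cases i
    · simp
    · simp
  | succ j ih =>
    intro i hi
    by_cases hij : i ≤ j + 1
    · rw [Finset.sum_Icc_succ_top hij, ih i hij]
      ring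
    · have h2 : i = j + 2 := by omega
      subst h2
      rw [Finset.Icc_eq_empty (by omega)]
      simp

end SUnitAux

theorem stmt_0 (p : ℕ) (hp : p.Prime) (n : ℕ) (hn : 3 ≤ n) :
    (∃ u : ℕ → ℚ,
      (∀ i ∈ Finset.Icc 1 n, IsSUnit {p} (u i)) ∧
      ∑ i ∈ Finset.Icc 1 n, u i = 0 ∧
      (∀ t : Finset ℕ, t ⊆ Finset.Icc 1 n → t.Nonempty → t ≠ Finset.Icc 1 n →
        ∑ i ∈ t, u i ≠ 0) ∧
      (∀ i j : ℕ, 1 ≤ i → i < j → j ≤ n →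
        (i, j) ≠ (1, n - 1) → (i, j) ≠ (2, n) →
        ¬ IsSUnit {p} (∑ k ∈ Finset.Icc i j, u k))) ↔
    n ≡ 2 [MOD p - 1] := by
  have hp2 : 2 ≤ p := hp.two_le
  constructor
  · rintro ⟨u, hu, hsum, hsub, -⟩
    have hchar : ∀ i, ∃ a b : ℕ, (i ∈ Finset.Icc 1 n →
        (u i = (p:ℚ)^a/(p:ℚ)^b ∨ u i = -((p:ℚ)^a/(p:ℚ)^b))) := by
      intro i
      by_cases hi : i ∈ Finset.Icc 1 n
      · obtain ⟨a, b, hab⟩ := SUnitAux.exists_pow_of_isSUnit hp (hu i hi)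
        exact ⟨a, b, fun _ => hab⟩
      · exact ⟨0, 0, fun h => absurd h hi⟩
    choose A B hAB using hchar
    set Bs := ∑ i ∈ Finset.Icc 1 n, B i with hBs
    have hBle : ∀ i ∈ Finset.Icc 1 n, B i ≤ Bs := fun i hi =>
      Finset.single_le_sum (fun j _ => Nat.zero_le _) hi
    have hpQ : (p:ℚ) ≠ 0 := by
      have : (0:ℚ) < p := by exact_mod_cast hp.pos
      exact ne_of_gt this
    have hz : ∀ i, ∃ z : ℤ, (i ∈ Finset.Icc 1 n →
        (((z:ℚ) = u i * (p:ℚ)^Bs) ∧ ∃ e : ℕ, z = (p:ℤ)^e ∨ z = -((p:ℤ)^e))) := by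
      intro i
      by_cases hi : i ∈ Finset.Icc 1 n
      · have hb := hBle i hi
        have hkey : ((p:ℚ)^(A i + (Bs - B i))) = (p:ℚ)^(A i)/(p:ℚ)^(B i) * (p:ℚ)^Bs := by
          rw [div_mul_eq_mul_div, eq_div_iff (pow_ne_zero _ hpQ), ← pow_add, ← pow_add]
          congr 1
          omega
        rcases hAB i hi with h | h
        · refine ⟨(p:ℤ)^(A i + (Bs - B i)), fun _ => ⟨?_, _, Or.inl rfl⟩⟩
          rw [h]
          push_cast
          exact hkey
        · refine ⟨-((p:ℤ)^(A i + (Bs - B i))), fun _ => ⟨?_, _, Or.inr rfl⟩⟩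
          rw [h]
          push_cast
          rw [neg_mul, hkey]
      · exact ⟨0, fun h => absurd h hi⟩
    choose v hv using hz
    set M := (Finset.Icc 1 n).val.map v with hM
    have hcard : M.card = n := by
      rw [hM, Multiset.card_map]
      show (Finset.Icc 1 n).card = n
      rw [Nat.card_Icc]
      omega
    have hMsum : M.sum = 0 := by
      have h0 : M.sum = ∑ i ∈ Finset.Icc 1 n, v i := rfl
      have h1 : ((∑ i ∈ Finset.Icc 1 n, v i : ℤ):ℚ) = ∑ i ∈ Finset.Icc 1 n, u i * (p:ℚ)^Bs := by
        push_cast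
        exact Finset.sum_congr rfl (fun i hi => (hv i hi).1)
      rw [← Finset.sum_mul, hsum, zero_mul] at h1
      rw [h0]
      exact_mod_cast h1
    have hM0 : M ≠ 0 := by
      intro h
      rw [h] at hcard
      simp at hcard
      omega
    have hH1 : ∀ x ∈ M, ∃ e : ℕ, x = (p:ℤ)^e ∨ x = -((p:ℤ)^e) := by
      intro x hx
      rw [hM] at hx
      obtain ⟨i, hi, rfl⟩ := Multiset.mem_map.mp hx
      exact (hv i hi).2
    have hH3 : ∀ N, N ≤ M → N ≠ 0 → N ≠ M → N.sum ≠ 0 := by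
      intro N hN hN0 hNM hNsum
      obtain ⟨t, ht, hteq⟩ := SUnitAux.exists_le_of_le_map v (Finset.Icc 1 n).val N hN
      have htnodup : t.Nodup := Multiset.nodup_of_le ht (Finset.Icc 1 n).nodup
      set T : Finset ℕ := ⟨t, htnodup⟩ with hT
      have hTsub : T ⊆ Finset.Icc 1 n := Finset.val_le_iff.mp ht
      have hTne : T.Nonempty := by
        rw [← Finset.card_pos]
        have h2 : t ≠ 0 := fun h => hN0 (by rw [← hteq, h]; simp)
        exact Multiset.card_pos.mpr h2
      have hTneq : T ≠ Finset.Icc 1 n := by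
        intro h
        apply hNM
        rw [← hteq, hM]
        congr 1
        exact congrArg Finset.val h
      apply hsub T hTsub hTne hTneq
      have h1 : ((N.sum : ℤ):ℚ) = ∑ i ∈ T, u i * (p:ℚ)^Bs := by
        rw [← hteq]
        have h2 : (t.map v).sum = ∑ i ∈ T, v i := rfl
        rw [h2]
        push_cast
        exact Finset.sum_congr rfl (fun i hi => (hv i (hTsub hi)).1)
      rw [hNsum, ← Finset.sum_mul] at h1
      simp only [Int.cast_zero] at h1
      rcases mul_eq_zero.mp h1.symm with h | h
      · exact h
      · exact absurd h (pow_ne_zero _ hpQ)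
    have hres := SUnitAux.key hp M.card M rfl hM0 hH1 hMsum hH3
    rwa [hcard] at hres
  · intro hmod
    have hdvd : (p-1) ∣ (n-2) := (Nat.modEq_iff_dvd' (by omega)).mp hmod.symm
    set k := (n-2)/(p-1) with hkdef
    have hn2 : n - 2 = k * (p-1) := (Nat.div_mul_cancel hdvd).symm
    have hk : 1 ≤ k := by
      rcases Nat.eq_zero_or_pos k with h | h
      · rw [h, zero_mul] at hn2; omega
      · exact h
    set X : ℕ → ℤ := SUnitAux.Xseq p k n with hX
    have hX1 : X 1 = 0 := if_neg (by omega)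
    have hXtop : X (n+1) = 0 := if_neg (by omega)
    have hXval : ∀ i, 2 ≤ i → i ≤ n → X i = (p:ℤ)^k - SUnitAux.hseq p (i-2) :=
      fun i h1 h2 => if_pos ⟨h1, h2⟩
    have hXn : X n = 1 := by
      rw [hXval n (by omega) le_rfl, hn2, SUnitAux.hseq_top hp2]
      ring
    have husum : ∀ i j, 1 ≤ i → i ≤ j →
        ∑ t ∈ Finset.Icc i j, ((X (t+1) - X t : ℤ):ℚ) = ((X (j+1) - X i : ℤ):ℚ) := by
      intro i j h1 h2
      have h3 := SUnitAux.sum_tele (fun t => ((X t : ℤ):ℚ)) j i (by omega)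
      push_cast
      push_cast at h3
      exact h3
    have hu1 : X 2 - X 1 = (p:ℤ)^k := by
      rw [hXval 2 le_rfl (by omega), hX1]
      show (p:ℤ)^k - SUnitAux.hseq p 0 - 0 = (p:ℤ)^k
      rw [SUnitAux.hseq_zero]
      ring
    have humid : ∀ i, 2 ≤ i → i ≤ n-1 → X (i+1) - X i = -((p:ℤ)^((i-2)/(p-1))) := by
      intro i h1 h2
      rw [hXval (i+1) (by omega) (by omega), hXval i h1 (by omega)]
      have hstep := SUnitAux.hseq_diff hp2 (i-2)
      have h3 : i+1-2 = (i-2)+1 := by omega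
      rw [h3]
      linarith [hstep]
    have hun : X (n+1) - X n = -1 := by rw [hXtop, hXn]; norm_num
    have hppos : (0:ℤ) < p := by exact_mod_cast hp.pos
    have huneg : ∀ i, 2 ≤ i → i ≤ n → X (i+1) - X i < 0 := by
      intro i h1 h2
      rcases eq_or_lt_of_le h2 with h | h
      · rw [h, hun]; omega
      · rw [humid i h1 (by omega)]
        have := pow_pos hppos ((i-2)/(p-1))
        omega
    refine ⟨fun i => ((X (i+1) - X i : ℤ) : ℚ), ?_, ?_, ?_, ?_⟩
    · intro i hi
      rw [Finset.mem_Icc] at hi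
      show IsSUnit {p} ((X (i+1) - X i : ℤ) : ℚ)
      rcases eq_or_lt_of_le hi.1 with h1 | h1
      · rw [← h1]
        rw [show X (1+1) - X 1 = (p:ℤ)^k from hu1]
        exact SUnitAux.isSUnit_intCast_pow hp k
      · rcases eq_or_lt_of_le hi.2 with h2 | h2
        · rw [h2, hun]
          have heq : ((-1:ℤ):ℚ) = -((((p:ℤ)^0 : ℤ)):ℚ) := by push_cast; ring
          rw [heq]
          exact SUnitAux.isSUnit_neg (SUnitAux.isSUnit_intCast_pow hp 0)
        · rw [humid i (by omega) (by omega)]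
          have heq : ((-((p:ℤ)^((i-2)/(p-1))):ℤ):ℚ) = -(((((p:ℤ)^((i-2)/(p-1)) : ℤ))):ℚ) := by
            push_cast; ring
          rw [heq]
          exact SUnitAux.isSUnit_neg (SUnitAux.isSUnit_intCast_pow hp _)
    · show (∑ i ∈ Finset.Icc 1 n, ((X (i+1) - X i : ℤ):ℚ)) = 0
      rw [husum 1 n (by omega) (by omega), hXtop, hX1]
      simp
    · intro t htsub htne htneq
      show (∑ i ∈ t, ((X (i+1) - X i : ℤ):ℚ)) ≠ 0
      have htotal : ∑ i ∈ Finset.Icc 1 n, ((X (i+1) - X i : ℤ):ℚ) = 0 := by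
        rw [husum 1 n (by omega) (by omega), hXtop, hX1]
        simp
      set s := Finset.Icc 1 n \ t with hs
      have hsne : s.Nonempty := by
        rw [hs, Finset.sdiff_nonempty]
        intro h
        exact htneq (Finset.Subset.antisymm htsub h)
      have hsplit : ∑ i ∈ s, ((X (i+1) - X i : ℤ):ℚ) + ∑ i ∈ t, ((X (i+1) - X i : ℤ):ℚ) = 0 := by
        rw [hs, Finset.sum_sdiff htsub]
        exact htotal
      by_cases h1t : (1:ℕ) ∈ t
      · have hneg : ∑ i ∈ s, ((X (i+1) - X i : ℤ):ℚ) < 0 := by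
          refine Finset.sum_neg (fun i hi => ?_) hsne
          rw [hs, Finset.mem_sdiff, Finset.mem_Icc] at hi
          have hi2 : 2 ≤ i := by
            rcases Nat.lt_or_ge i 2 with h | h
            · interval_cases i
              · omega
              · exact absurd h1t hi.2
            · exact h
          have := huneg i hi2 hi.1.2
          exact_mod_cast (by exact_mod_cast this : ((X (i+1) - X i : ℤ):ℚ) < ((0:ℤ):ℚ))
        intro h0
        rw [h0, add_zero] at hsplit
        linarith
      · have hneg : ∑ i ∈ t, ((X (i+1) - X i : ℤ):ℚ) < 0 := by
          refine Finset.sum_neg (fun i hi => ?_) htne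
          have hmem := htsub hi
          rw [Finset.mem_Icc] at hmem
          have hi2 : 2 ≤ i := by
            rcases Nat.lt_or_ge i 2 with h | h
            · interval_cases i
              · omega
              · exact absurd hi h1t
            · exact h
          have := huneg i hi2 hmem.2
          exact_mod_cast (by exact_mod_cast this : ((X (i+1) - X i : ℤ):ℚ) < ((0:ℤ):ℚ))
        exact hneg.ne
    · intro i j hi hij hjn hne1 hne2
      show ¬ IsSUnit {p} (∑ t ∈ Finset.Icc i j, ((X (t+1) - X t : ℤ):ℚ))
      rw [husum i j hi (le_of_lt hij)]
      by_cases hi1 : i = 1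
      · subst hi1
        by_cases hjn' : j = n
        · subst hjn'
          rw [hXtop, hX1]
          simpa using SUnitAux.not_isSUnit_zero {p}
        · have hj2 : 2 ≤ j := by omega
          have hjne : j ≠ n-1 := by
            intro h
            exact hne1 (by rw [h])
          have hjle : j ≤ n-2 := by omega
          rw [hXval (j+1) (by omega) (by omega), hX1]
          have h3 : j+1-2 = j-1 := by omega
          rw [h3, sub_zero]
          exact SUnitAux.not_isSUnit_V hp hk (by omega) (by omega)
      · have hi2 : 2 ≤ i := by omega
        by_cases hjn' : j = n
        · have hi3 : 3 ≤ i := by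
            have : i ≠ 2 := by
              intro h
              exact hne2 (by rw [h, hjn'])
            omega
          subst hjn'
          rw [hXtop, hXval i hi2 (by omega)]
          have heq : (0 : ℤ) - ((p:ℤ)^k - SUnitAux.hseq p (i-2)) =
              SUnitAux.hseq p (i-2) - (p:ℤ)^k := by ring
          rw [heq]
          exact SUnitAux.not_isSUnit_V' hp hk (by omega) (by omega)
        · have hjn1 : j ≤ n-1 := by omega
          rw [hXval (j+1) (by omega) (by omega), hXval i hi2 (by omega)]
          have heq : ((p:ℤ)^k - SUnitAux.hseq p (j+1-2)) - ((p:ℤ)^k - SUnitAux.hseq p (i-2)) =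
              SUnitAux.hseq p (i-2) - SUnitAux.hseq p (j-1) := by
            have h3 : j+1-2 = j-1 := by omega
            rw [h3]
            ring
          rw [heq]
          exact SUnitAux.not_isSUnit_hdiff hp (show (i-2) + 2 ≤ j-1 by omega)
end

section
/- Let S be a finite nonempty set of primes and m = gcd{p − 1 : p ∈ S}. Then for every sufficiently large positive integer k with k ≡ 1 (mod m) there exist positive S-units u_1, u_2, …, u_k such that u_1 + u_2 + ⋯ + u_k = 1. -/
lemma bezout (S : Finset ℕ) (f : ℕ → ℕ) :
    ∃ c : ℕ → ℤ, ∑ p ∈ S, c p * f p = S.gcd f := by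
  classical
  induction S using Finset.induction_on with
  | empty => exact ⟨0, by simp⟩
  | @insert a s hnotmem ih =>
    obtain ⟨c, hc⟩ := ih
    refine ⟨fun p => if p = a then Nat.gcdA (f a) (s.gcd f)
      else Nat.gcdB (f a) (s.gcd f) * c p, ?_⟩
    rw [Finset.sum_insert hnotmem, Finset.gcd_insert]
    have h1 : ∀ p ∈ s, (if p = a then Nat.gcdA (f a) (s.gcd f)
        else Nat.gcdB (f a) (s.gcd f) * c p) * (f p : ℤ)
        = Nat.gcdB (f a) (s.gcd f) * (c p * f p) := by
      intro p hp
      rw [if_neg (by rintro rfl; exact hnotmem hp), mul_assoc]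
    rw [Finset.sum_congr rfl h1, ← Finset.mul_sum, hc]
    simp only [if_pos rfl]
    have h2 := Nat.gcd_eq_gcd_ab (f a) (s.gcd f)
    have h3 : gcd (f a) (s.gcd f) = Nat.gcd (f a) (s.gcd f) := rfl
    rw [h3]
    push_cast [h2]
    ring

lemma semigroup_cofinite (S : Finset ℕ) (f : ℕ → ℕ) (p₀ : ℕ) (hp₀ : p₀ ∈ S)
    (ha : 0 < f p₀) :
    ∃ N : ℕ, ∀ n : ℕ, N ≤ n → S.gcd f ∣ n → ∃ g : ℕ → ℕ, n = ∑ p ∈ S, g p * f p := by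
  classical
  set m := S.gcd f with hm
  set a := f p₀ with hadef
  have hma : m ∣ a := Finset.gcd_dvd hp₀
  have hm0 : 0 < m := Nat.pos_of_dvd_of_pos hma ha
  obtain ⟨c, hc⟩ := bezout S f
  set d : ℕ → ℤ := fun p => c p % a with hd
  set D : ℤ := c p₀ + ∑ p ∈ S.erase p₀, (c p / a) * f p with hD
  have hane : (a : ℤ) ≠ 0 := by exact_mod_cast ha.ne'
  have key : (m : ℤ) = a * D + ∑ p ∈ S.erase p₀, d p * f p := by
    have hterm : ∀ p ∈ S.erase p₀, c p * (f p : ℤ)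
        = (a : ℤ) * (c p / a * f p) + (c p % a) * f p := by
      intro p _
      linear_combination (-(f p : ℤ)) * (Int.mul_ediv_add_emod (c p) (a : ℤ))
    rw [← hc, ← Finset.add_sum_erase _ _ hp₀, hD, hd, mul_add, Finset.mul_sum,
      add_assoc, ← Finset.sum_add_distrib, Finset.sum_congr rfl hterm, ← hadef]
    ring
  refine ⟨a * (a * D.natAbs + 1), fun n hn hmn => ?_⟩
  set x := n / a with hx
  set r := n % a with hr
  have hxr : a * x + r = n := Nat.div_add_mod n a
  have hra : r < a := Nat.mod_lt _ ha
  have hmr : m ∣ r := (Nat.dvd_mod_iff hma).2 hmn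
  set s := r / m with hs
  have hsr : m * s = r := Nat.mul_div_cancel' hmr
  have hsa : s < a := lt_of_le_of_lt (Nat.div_le_self _ _) hra
  have hxbig : a * D.natAbs + 1 ≤ x := by
    rw [hx, Nat.le_div_iff_mul_le ha]
    calc (a * D.natAbs + 1) * a = a * (a * D.natAbs + 1) := by ring
    _ ≤ n := hn
  set X : ℤ := x + s * D with hX
  have hX0 : 0 ≤ X := by
    have hDabs : -(D.natAbs : ℤ) ≤ D := by
      rw [← Int.abs_eq_natAbs]; exact neg_abs_le D
    have hsa' : (s : ℤ) ≤ a := by exact_mod_cast hsa.le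
    have hs0 : (0 : ℤ) ≤ s := Int.natCast_nonneg s
    have hDa0 : (0 : ℤ) ≤ D.natAbs := Int.natCast_nonneg _
    have h4 : ((a : ℤ) * D.natAbs + 1) ≤ (x : ℤ) := by exact_mod_cast hxbig
    rw [hX]
    nlinarith
  refine ⟨fun p => if p = p₀ then X.toNat else s * (d p).toNat, ?_⟩
  have hdnn : ∀ p, 0 ≤ d p := fun p => Int.emod_nonneg _ hane
  have hcast : ((∑ p ∈ S, (if p = p₀ then X.toNat else s * (d p).toNat) * f p : ℕ) : ℤ)
      = (n : ℤ) := by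
    push_cast
    rw [← Finset.add_sum_erase _ _ hp₀]
    rw [if_pos rfl]
    have herase : ∀ p ∈ S.erase p₀,
        (if p = p₀ then (X.toNat : ℤ) else (s : ℤ) * ((d p).toNat : ℤ)) * (f p : ℤ)
        = (s : ℤ) * (d p * f p) := by
      intro p hp
      rw [if_neg (Finset.ne_of_mem_erase hp), Int.toNat_of_nonneg (hdnn p), mul_assoc]
    rw [Finset.sum_congr rfl herase, ← Finset.mul_sum, Int.toNat_of_nonneg hX0]
    have hsum : ∑ p ∈ S.erase p₀, d p * f p = (m : ℤ) - a * D := by linarith [key]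
    rw [hsum, hX, ← hadef]
    have h5 : (a : ℤ) * x + r = n := by exact_mod_cast hxr
    have h6 : (m : ℤ) * s = r := by exact_mod_cast hsr
    linear_combination h5 + h6
  exact_mod_cast hcast.symm

lemma construct (S : Finset ℕ) (hP : ∀ p ∈ S, p.Prime) (g : ℕ → ℕ) :
    ∃ l : List ℚ, l.length = 1 + ∑ p ∈ S, g p * (p - 1) ∧
      (∀ x ∈ l, ∃ n : ℕ, 0 < n ∧ (∀ q : ℕ, q.Prime → q ∣ n → q ∈ S) ∧ x = 1 / n) ∧
      l.sum = 1 := by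
  classical
  suffices h : ∀ N : ℕ, ∀ g : ℕ → ℕ, ∑ p ∈ S, g p = N →
      ∃ l : List ℚ, l.length = 1 + ∑ p ∈ S, g p * (p - 1) ∧
      (∀ x ∈ l, ∃ n : ℕ, 0 < n ∧ (∀ q : ℕ, q.Prime → q ∣ n → q ∈ S) ∧ x = 1 / n) ∧
      l.sum = 1 by
    exact h _ g rfl
  intro N
  induction N with
  | zero =>
    intro g hg
    have hz : ∀ p ∈ S, g p = 0 := by
      intro p hp
      exact (Finset.sum_eq_zero_iff).1 hg p hp
    refine ⟨[1], ?_, ?_, by simp⟩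
    · rw [Finset.sum_eq_zero (fun p hp => by rw [hz p hp, zero_mul])]
      simp
    · intro x hx
      simp only [List.mem_singleton] at hx
      exact ⟨1, one_pos, fun q hq hdvd => absurd (Nat.dvd_one.1 hdvd) hq.ne_one, by simp [hx]⟩
  | succ N ih =>
    intro g hg
    have hex : ∃ p₀ ∈ S, 0 < g p₀ := by
      by_contra hcon
      push_neg at hcon
      have : ∑ p ∈ S, g p = 0 := Finset.sum_eq_zero (fun p hp => Nat.le_zero.1 (hcon p hp))
      omega
    obtain ⟨p₀, hp₀S, hgp₀⟩ := hex
    have hp₀ : p₀.Prime := hP p₀ hp₀S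
    have hp2 : 2 ≤ p₀ := hp₀.two_le
    obtain ⟨t0, ht0⟩ : ∃ t0, g p₀ = t0 + 1 := ⟨g p₀ - 1, by omega⟩
    set g' : ℕ → ℕ := Function.update g p₀ t0 with hg'
    have hsum' : ∑ p ∈ S, g' p = N := by
      rw [hg', Finset.sum_update_of_mem hp₀S, Finset.sdiff_singleton_eq_erase]
      rw [← Finset.add_sum_erase _ _ hp₀S] at hg
      omega
    have hrel : ∑ p ∈ S, g p * (p - 1) = ∑ p ∈ S, g' p * (p - 1) + (p₀ - 1) := by
      have h1 : ∑ p ∈ S, g' p * (p - 1)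
          = t0 * (p₀ - 1) + ∑ p ∈ S.erase p₀, g p * (p - 1) := by
        rw [← Finset.add_sum_erase _ (fun p => g' p * (p - 1)) hp₀S]
        congr 1
        · rw [hg', Function.update_self]
        · exact Finset.sum_congr rfl fun p hp => by
            rw [hg', Function.update_of_ne (Finset.ne_of_mem_erase hp)]
      rw [h1, ← Finset.add_sum_erase _ (fun p => g p * (p - 1)) hp₀S, ht0]
      ring
    obtain ⟨l, hlen, hmem, hsum⟩ := ih g' hsum'
    match l, hlen with
    | h :: t, hlen =>
      have hgood := hmem h List.mem_cons_self
      obtain ⟨n, hn0, hnS, hneq⟩ := hgood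
      refine ⟨List.replicate p₀ (h / p₀) ++ t, ?_, ?_, ?_⟩
      · simp only [List.length_append, List.length_replicate]
        simp only [List.length_cons] at hlen
        omega
      · intro x hx
        rw [List.mem_append] at hx
        rcases hx with hx | hx
        · rw [List.eq_of_mem_replicate hx]
          refine ⟨n * p₀, Nat.mul_pos hn0 (by omega), ?_, ?_⟩
          · intro q hq hdvd
            rcases (Nat.Prime.dvd_mul hq).1 hdvd with h1 | h1
            · exact hnS q hq h1
            · rwa [(Nat.prime_dvd_prime_iff_eq hq hp₀).1 h1]
          · rw [hneq]
            push_cast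
            rw [div_div]
        · exact hmem x (List.mem_cons_of_mem _ hx)
      · rw [List.sum_append, List.sum_replicate, nsmul_eq_mul]
        have hp₀ne : (p₀ : ℚ) ≠ 0 := by positivity
        rw [mul_div_cancel₀ _ hp₀ne]
        simpa using hsum

theorem stmt_4 (S : Finset ℕ) (hS : S.Nonempty) (hP : ∀ p ∈ S, p.Prime) :
    ∃ k₀ : ℕ, ∀ k : ℕ, k₀ ≤ k → 0 < k → k ≡ 1 [MOD S.gcd (fun p => p - 1)] →
      ∃ u : Fin k → ℚ,
        (∀ i, 0 < u i ∧ IsSUnit S (u i)) ∧ ∑ i, u i = 1 := by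
  obtain ⟨p₀, hp₀S⟩ := hS
  have hp₀ : p₀.Prime := hP p₀ hp₀S
  have hfp₀ : 0 < (fun p => p - 1) p₀ := by
    simp only
    have := hp₀.two_le
    omega
  obtain ⟨N, hN⟩ := semigroup_cofinite S (fun p => p - 1) p₀ hp₀S hfp₀
  refine ⟨N + 1, fun k hk hk0 hmod => ?_⟩
  have h1k : 1 ≤ k := hk0
  have hdvd : S.gcd (fun p => p - 1) ∣ k - 1 := (Nat.modEq_iff_dvd' h1k).1 hmod.symm
  obtain ⟨g, hg⟩ := hN (k - 1) (by omega) hdvd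
  obtain ⟨l, hlen, hmem, hsum⟩ := construct S hP g
  have hk' : l.length = k := by omega
  subst hk'
  refine ⟨l.get, fun i => ?_, ?_⟩
  · have hmemi : l.get i ∈ l := l.get_mem i
    obtain ⟨n, hn0, hnS, hneq⟩ := hmem _ hmemi
    have hnq : (0 : ℚ) < n := by exact_mod_cast hn0
    have hpos : 0 < l.get i := by rw [hneq]; positivity
    refine ⟨hpos, hpos.ne', fun p hp hdp => ?_⟩
    have hnum : (l.get i).num = 1 := by
      rw [hneq, one_div]
      exact Rat.inv_natCast_num_of_pos hn0
    have hden : (l.get i).den = n := by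
      rw [hneq, one_div]
      exact Rat.inv_natCast_den_of_pos hn0
    rcases hdp with hd | hd
    · rw [hnum] at hd
      have : (p : ℤ) = 1 := Int.eq_one_of_dvd_one (by positivity) hd
      have : p = 1 := by exact_mod_cast this
      exact absurd this hp.ne_one
    · rw [hden] at hd
      exact hnS p hp hd
  · rw [← List.sum_ofFn, List.ofFn_get]
    exact hsum
end

section
/- Let S be a finite nonempty set of primes and m = gcd{p − 1 : p ∈ S}. If u_1, u_2, …, u_k are positive S-units with u_1 + u_2 + ⋯ + u_k = 1, then k ≡ 1 (mod m). -/
lemma smooth_cast_one (m n : ℕ) (hn : n ≠ 0)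
    (h : ∀ p : ℕ, p.Prime → p ∣ n → (p : ZMod m) = 1) : (n : ZMod m) = 1 := by
  conv_lhs => rw [← Nat.prod_primeFactorsList hn]
  rw [Nat.cast_list_prod]
  apply List.prod_eq_one
  intro x hx
  rw [List.mem_map] at hx
  obtain ⟨p, hp, rfl⟩ := hx
  exact h p (Nat.prime_of_mem_primeFactorsList hp) (Nat.dvd_of_mem_primeFactorsList hp)

theorem stmt_8 (S : Finset ℕ) (hS : S.Nonempty) (hP : ∀ p ∈ S, p.Prime)
    (k : ℕ) (hk : 0 < k) (u : Fin k → ℚ)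
    (hu : ∀ i, 0 < u i ∧ IsSUnit S (u i)) (hsum : ∑ i, u i = 1) :
    k ≡ 1 [MOD S.gcd (fun p => p - 1)] := by
  set m := S.gcd (fun p => p - 1) with hm
  have hprime1 : ∀ p ∈ S, (p : ZMod m) = 1 := by
    intro p hp
    obtain ⟨c, hc⟩ : m ∣ p - 1 := Finset.gcd_dvd hp
    have h2 : 2 ≤ p := (hP p hp).two_le
    have hp' : p = m * c + 1 := by omega
    rw [hp']
    push_cast
    simp [ZMod.natCast_self]
  have hden1 : ∀ i, (((u i).den : ℕ) : ZMod m) = 1 := by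
    intro i
    refine smooth_cast_one m _ (u i).den_nz (fun p pp pd => hprime1 p ?_)
    exact (hu i).2.2 p pp (Or.inr pd)
  have hnum1 : ∀ i, (((u i).num : ℤ) : ZMod m) = 1 := by
    intro i
    have hpos : 0 < (u i).num := Rat.num_pos.mpr (hu i).1
    have ht : (u i).num = ((u i).num.toNat : ℤ) := (Int.toNat_of_nonneg hpos.le).symm
    rw [ht, Int.cast_natCast]
    refine smooth_cast_one m _ (by omega) (fun p pp pd => hprime1 p ?_)
    refine (hu i).2.2 p pp (Or.inl ?_)
    rw [ht]
    exact_mod_cast Int.natCast_dvd_natCast.mpr pd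
  set N : Fin k → ℤ := fun i => (u i).num * ∏ j ∈ Finset.univ.erase i, ((u j).den : ℤ)
    with hN
  set D : ℕ := ∏ j, (u j).den with hD
  have key : ∀ i, ((N i : ℤ) : ℚ) = u i * D := by
    intro i
    have hud : u i * ((u i).den : ℚ) = (u i).num := Rat.mul_den_eq_num (u i)
    rw [hN, hD]
    push_cast
    rw [← Finset.mul_prod_erase Finset.univ (fun j => ((u j).den : ℚ)) (Finset.mem_univ i),
      ← mul_assoc, hud]
  have hsumZ : ∑ i, N i = (D : ℤ) := by
    have : ((∑ i, N i : ℤ) : ℚ) = ((D : ℤ) : ℚ) := by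
      push_cast [key]
      rw [← Finset.sum_mul, hsum, one_mul]
    exact_mod_cast this
  have hfin : ((k : ℕ) : ZMod m) = ((1 : ℕ) : ZMod m) := by
    have h2 := congrArg (fun z : ℤ => (z : ZMod m)) hsumZ
    simp only [Int.cast_sum, Int.cast_natCast] at h2
    have hL : ∀ i, ((N i : ℤ) : ZMod m) = 1 := by
      intro i
      rw [hN]
      push_cast
      rw [hnum1 i, one_mul]
      apply Finset.prod_eq_one
      intro j _
      exact hden1 j
    rw [Finset.sum_congr rfl (fun i _ => hL i), Finset.sum_const, Finset.card_univ,
      Fintype.card_fin, nsmul_eq_mul, mul_one] at h2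
    have hR : ((D : ℕ) : ZMod m) = 1 := by
      rw [hD]; push_cast
      exact Finset.prod_eq_one (fun j _ => hden1 j)
    rw [hR] at h2
    simpa using h2
  exact (ZMod.natCast_eq_natCast_iff k 1 m).mp hfin
end

section
/- Let p be a prime number and S = {p}. If u_1, u_2, …, u_n are S-units with u_1 + u_2 + ⋯ + u_n = 0 and no nonempty proper subfamily of the u_i sums to 0 (i.e. u_{i_1} + ⋯ + u_{i_l} ≠ 0 for all 0 < l < n and 1 ≤ i_1 < ⋯ < i_l ≤ n), then n ≡ 2 (mod p − 1). -/
lemma my_exists_of_le_map {α β : Type*} [DecidableEq β] {f : α → β} :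
    ∀ (s : Multiset α) (t : Multiset β), t ≤ s.map f → ∃ s' ≤ s, t = s'.map f := by
  intro s
  induction s using Multiset.induction with
  | empty => intro t ht; simp at ht; exact ⟨0, le_refl _, by simp [ht]⟩
  | cons a s ih =>
    intro t ht
    rw [Multiset.map_cons] at ht
    by_cases hfa : f a ∈ t
    · have h1 : t.erase (f a) ≤ s.map f := by
        have := Multiset.erase_le_erase (f a) ht
        rwa [Multiset.erase_cons_head] at this
      obtain ⟨s', hs', hts'⟩ := ih _ h1
      exact ⟨a ::ₘ s', Multiset.cons_le_cons a hs',
        by rw [Multiset.map_cons, ← hts', Multiset.cons_erase hfa]⟩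
    · have h1 : t ≤ s.map f := by
        rw [Multiset.le_iff_count]
        intro b
        rcases eq_or_ne b (f a) with rfl | hb
        · simp [Multiset.count_eq_zero.2 hfa]
        · have := Multiset.le_iff_count.1 ht b
          rwa [Multiset.count_cons_of_ne hb] at this
      obtain ⟨s', hs', hts'⟩ := ih _ h1
      exact ⟨s', le_trans hs' (Multiset.le_cons_self _ _), hts'⟩

lemma my_split {α : Type*} [DecidableEq α] {a b t : Multiset α} (h : t ≤ a + b) :
    ∃ ta tb, ta ≤ a ∧ tb ≤ b ∧ t = ta + tb := by
  refine ⟨t ∩ a, t - a, Multiset.inter_le_right, ?_, ?_⟩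
  · rw [Multiset.le_iff_count]; intro x
    have h1 := Multiset.le_iff_count.1 h x
    simp only [Multiset.count_add] at h1
    rw [Multiset.count_sub]
    omega
  · ext x
    simp only [Multiset.count_add, Multiset.count_inter, Multiset.count_sub]
    have h1 := Multiset.le_iff_count.1 h x
    simp only [Multiset.count_add] at h1
    omega

/-- The value of a signed power of `p`. -/
def sval (p : ℕ) (x : Bool × ℕ) : ℤ := (if x.1 then 1 else -1) * (p : ℤ) ^ x.2

lemma aux_key (p : ℕ) (hp : p.Prime) : ∀ (N : ℕ) (s : Multiset (Bool × ℕ)),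
    Multiset.card s ≤ N →
    s ≠ 0 → (s.map (sval p)).sum = 0 →
    (∀ t, t ≤ s → t ≠ 0 → t ≠ s → (t.map (sval p)).sum ≠ 0) →
    Multiset.card s ≡ 2 [MOD p - 1] := by
  intro N
  induction N with
  | zero =>
    intro s hcard hs
    exact absurd (Multiset.card_eq_zero.1 (Nat.le_zero.1 hcard)) hs
  | succ N ih =>
    intro s hcard hs hsum hmin
    by_cases h2 : Multiset.card s = 2
    · rw [h2]
    -- same sign at each level
    have hsign : ∀ x ∈ s, ∀ y ∈ s, x.2 = y.2 → x.1 = y.1 := by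
      intro x hx y hy hxy
      by_contra hne
      have hxyne : x ≠ y := fun h => hne (congrArg Prod.fst h)
      have hpair : (x ::ₘ {y} : Multiset (Bool × ℕ)) ≤ s := by
        have hy' : y ∈ s.erase x := (Multiset.mem_erase_of_ne hxyne.symm).2 hy
        calc (x ::ₘ {y} : Multiset (Bool × ℕ)) ≤ x ::ₘ s.erase x :=
              Multiset.cons_le_cons x (Multiset.singleton_le.2 hy')
          _ = s := Multiset.cons_erase hx
      have hps : ((x ::ₘ {y} : Multiset (Bool × ℕ)).map (sval p)).sum = 0 := by
        simp only [Multiset.map_cons, Multiset.map_singleton, Multiset.sum_cons,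
          Multiset.sum_singleton]
        unfold sval
        rw [hxy]
        rcases hx1 : x.1 <;> rcases hy1 : y.1 <;> simp_all
      refine hmin _ hpair (by simp) ?_ hps
      intro he
      rw [← he] at h2
      simp at h2
    -- minimum exponent
    classical
    have hesne : (s.map Prod.snd).toFinset.Nonempty := by
      obtain ⟨x, hx⟩ := Multiset.exists_mem_of_ne_zero hs
      exact ⟨x.2, Multiset.mem_toFinset.2 (Multiset.mem_map.2 ⟨x, hx, rfl⟩)⟩
    set m := (s.map Prod.snd).toFinset.min' hesne with hm_def
    set s0 := s.filter (fun x => x.2 = m) with hs0_def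
    set s1 := s.filter (fun x => ¬ x.2 = m) with hs1_def
    have hsplit : s0 + s1 = s := Multiset.filter_add_not _ s
    obtain ⟨x0, hx0s, hx0m⟩ : ∃ x ∈ s, x.2 = m := by
      have := (s.map Prod.snd).toFinset.min'_mem hesne
      rw [Multiset.mem_toFinset, Multiset.mem_map] at this
      obtain ⟨x, hx, hxm⟩ := this
      exact ⟨x, hx, hxm⟩
    set σ := x0.1 with hσ_def
    have hs0rep : s0 = Multiset.replicate (Multiset.card s0) (σ, m) := by
      apply Multiset.eq_replicate_card.2
      intro y hy
      have hy' := Multiset.mem_filter.1 hy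
      have h1 : y.1 = σ := hsign y hy'.1 x0 hx0s (hy'.2.trans hx0m.symm)
      exact Prod.ext h1 hy'.2
    have hs0ne : s0 ≠ 0 := by
      intro h0
      have : x0 ∈ s0 := Multiset.mem_filter.2 ⟨hx0s, hx0m⟩
      rw [h0] at this
      exact absurd this (Multiset.notMem_zero x0)
    have ht0pos : 0 < Multiset.card s0 := Multiset.card_pos.2 hs0ne
    have hs1mem : ∀ y ∈ s1, m + 1 ≤ y.2 := by
      intro y hy
      have hy' := Multiset.mem_filter.1 hy
      have h1 : m ≤ y.2 := (s.map Prod.snd).toFinset.min'_le _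
        (Multiset.mem_toFinset.2 (Multiset.mem_map.2 ⟨y, hy'.1, rfl⟩))
      have h2 := hy'.2
      omega
    have hdvd1 : ((p:ℤ)) ^ (m+1) ∣ (s1.map (sval p)).sum := by
      apply Multiset.dvd_sum
      intro z hz
      obtain ⟨y, hy, rfl⟩ := Multiset.mem_map.1 hz
      exact Dvd.dvd.mul_left (pow_dvd_pow _ (hs1mem y hy)) _
    have hsum2 : (s0.map (sval p)).sum + (s1.map (sval p)).sum = 0 := by
      rw [← Multiset.sum_add, ← Multiset.map_add, hsplit]; exact hsum
    have hs0sum : (s0.map (sval p)).sum = (Multiset.card s0 : ℤ) * sval p (σ, m) := by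
      conv_lhs => rw [hs0rep]
      rw [Multiset.map_replicate, Multiset.sum_replicate, nsmul_eq_mul]
    have hdvd2 : ((p:ℤ)) ^ (m+1) ∣ (Multiset.card s0 : ℤ) * sval p (σ, m) := by
      rw [← hs0sum]
      have h3 : (s0.map (sval p)).sum = -(s1.map (sval p)).sum := by linarith
      rw [h3]
      exact dvd_neg.2 hdvd1
    have hppos : (p:ℤ) ≠ 0 := Int.natCast_ne_zero.2 hp.ne_zero
    have hpt0 : p ∣ Multiset.card s0 := by
      have h1 : ((p:ℤ)) ^ m * (p:ℤ) ∣ ((p:ℤ)) ^ m *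
          ((Multiset.card s0 : ℤ) * (if σ then (1:ℤ) else -1)) := by
        rw [← pow_succ]
        have : ((p:ℤ)) ^ m * ((Multiset.card s0 : ℤ) * (if σ then (1:ℤ) else -1))
            = (Multiset.card s0 : ℤ) * sval p (σ, m) := by
          unfold sval; ring
        rw [this]
        exact hdvd2
      have h2 : (p:ℤ) ∣ (Multiset.card s0 : ℤ) * (if σ then (1:ℤ) else -1) :=
        (mul_dvd_mul_iff_left (pow_ne_zero m hppos)).1 h1
      have h3 : (p:ℤ) ∣ (Multiset.card s0 : ℤ) := by
        rcases σ <;> simpa using h2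
      exact Int.ofNat_dvd.1 h3
    obtain ⟨k, hk⟩ := hpt0
    have hk1 : 1 ≤ k := by
      rcases Nat.eq_zero_or_pos k with h | h
      · subst h; omega
      · exact h
    set s' : Multiset (Bool × ℕ) := Multiset.replicate k (σ, m+1) + s1 with hs'_def
    have hsval_scale : (p:ℤ) * sval p (σ, m) = sval p (σ, m+1) := by
      unfold sval
      rw [pow_succ]
      ring
    have hs'sum : (s'.map (sval p)).sum = 0 := by
      rw [hs'_def, Multiset.map_add, Multiset.sum_add, Multiset.map_replicate,
        Multiset.sum_replicate, nsmul_eq_mul]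
      have h4 : (k:ℤ) * sval p (σ, m+1) = (Multiset.card s0 : ℤ) * sval p (σ, m) := by
        rw [← hsval_scale, hk]
        push_cast
        ring
      rw [h4, ← hs0sum]
      exact hsum2
    have hcard_s : Multiset.card s = Multiset.card s0 + Multiset.card s1 := by
      rw [← hsplit, Multiset.card_add]
    have hcard_s' : Multiset.card s' = k + Multiset.card s1 := by
      rw [hs'_def, Multiset.card_add, Multiset.card_replicate]
    have hs'ne : s' ≠ 0 := by
      intro h0
      have := congrArg Multiset.card h0
      rw [hcard_s'] at this
      simp at this
      omega
    have hmin' : ∀ t, t ≤ s' → t ≠ 0 → t ≠ s' → (t.map (sval p)).sum ≠ 0 := by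
      intro t ht htne hts'
      rw [hs'_def] at ht
      obtain ⟨ta, tb, hta, htb, rfl⟩ := my_split ht
      obtain ⟨r, hrk, hta_eq⟩ := Multiset.le_replicate_iff.1 hta
      subst hta_eq
      have hctb : Multiset.count (σ, m) tb = 0 := by
        apply Multiset.count_eq_zero.2
        intro hmem
        exact (Multiset.mem_filter.1 (Multiset.mem_of_le htb hmem)).2 rfl
      have htolds : Multiset.replicate (p*r) (σ, m) + tb ≤ s := by
        rw [← hsplit]
        conv_rhs => rw [hs0rep]
        exact add_le_add ((Multiset.replicate_le_replicate _).2
          (by rw [hk]; exact Nat.mul_le_mul_left p hrk)) htb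
      have htold0 : Multiset.replicate (p*r) (σ, m) + tb ≠ 0 := by
        intro h0
        apply htne
        have hc := congrArg Multiset.card h0
        rw [Multiset.card_add, Multiset.card_replicate] at hc
        simp only [Multiset.card_zero] at hc
        have hp2 := hp.two_le
        have hr0 : r = 0 := by
          rcases Nat.eq_zero_or_pos r with h | h
          · exact h
          · exfalso; have : 0 < p * r := Nat.mul_pos hp.pos h; omega
        have htb0 : tb = 0 := Multiset.card_eq_zero.1 (by omega)
        rw [hr0, htb0]
        simp
      have htoldne : Multiset.replicate (p*r) (σ, m) + tb ≠ s := by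
        intro hes2
        apply hts'
        have hcs : Multiset.count (σ, m) s = p * k := by
          rw [← hsplit, Multiset.count_add]
          conv_lhs => rw [hs0rep]
          rw [Multiset.count_replicate_self]
          have hc1 : Multiset.count (σ, m) s1 = 0 := by
            apply Multiset.count_eq_zero.2
            intro hmem
            exact (Multiset.mem_filter.1 hmem).2 rfl
          rw [hc1, hk]
          omega
        have hcount := congrArg (Multiset.count (σ, m)) hes2
        rw [Multiset.count_add, Multiset.count_replicate_self, hctb, hcs] at hcount
        have hrk2 : r = k := Nat.eq_of_mul_eq_mul_left hp.pos (by omega)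
        subst hrk2
        have h5 : Multiset.replicate (p*r) (σ, m) + tb
            = Multiset.replicate (p*r) (σ, m) + s1 := by
          rw [hes2, ← hsplit]
          congr 1
          rw [hs0rep, hk]
        have htbs1 : tb = s1 := add_left_cancel h5
        rw [hs'_def, htbs1]
      have hsumeq : ((Multiset.replicate r (σ, m+1) + tb).map (sval p)).sum =
          ((Multiset.replicate (p*r) (σ, m) + tb).map (sval p)).sum := by
        simp only [Multiset.map_add, Multiset.sum_add, Multiset.map_replicate,
          Multiset.sum_replicate, nsmul_eq_mul]
        congr 1
        rw [← hsval_scale]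
        push_cast
        ring
      rw [hsumeq]
      exact hmin _ htolds htold0 htoldne
    have hklep : 2 * k ≤ p * k := Nat.mul_le_mul_right k hp.two_le
    have hcard' : Multiset.card s' ≤ N := by
      rw [hcard_s']
      rw [hcard_s, hk] at hcard
      omega
    have hres := ih s' hcard' hs'ne hs'sum hmin'
    have h1 : k * (p-1) + k = k * p := by
      have h2 : p - 1 + 1 = p := Nat.succ_pred_eq_of_pos hp.pos
      calc k * (p-1) + k = k * ((p-1)+1) := by ring
        _ = k * p := by rw [h2]
    have heq : Multiset.card s = Multiset.card s' + k * (p-1) := by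
      rw [hcard_s, hcard_s', hk, mul_comm p k, ← h1]
      ring
    have hmodeq : Multiset.card s ≡ Multiset.card s' [MOD p - 1] := by
      rw [heq]
      have h6 : k * (p-1) ≡ 0 [MOD p-1] := Nat.modEq_zero_iff_dvd.2 ⟨k, mul_comm _ _⟩
      calc Multiset.card s' + k*(p-1) ≡ Multiset.card s' + 0 [MOD p-1] :=
            Nat.ModEq.add_left _ h6
        _ = Multiset.card s' := by rw [add_zero]
    exact hmodeq.trans hres

lemma unit_form {p : ℕ} (hp : p.Prime) {u : ℚ} (h : IsSUnit {p} u) :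
    ∃ (bb : Bool) (a b : ℕ), u = (if bb then 1 else -1) * (p:ℚ)^a / (p:ℚ)^b := by
  obtain ⟨hne, hpr⟩ := h
  have hnum : u.num ≠ 0 := Rat.num_ne_zero.2 hne
  have hnaz : u.num.natAbs ≠ 0 := Int.natAbs_ne_zero.2 hnum
  have h1 : ∀ {q : ℕ}, q.Prime → q ∣ u.num.natAbs → q = p := by
    intro q hq hdvd
    have hd2 : (q : ℤ) ∣ u.num :=
      dvd_trans (Int.natCast_dvd_natCast.2 hdvd) (Int.natAbs_dvd.2 dvd_rfl)
    exact Finset.mem_singleton.1 (hpr q hq (Or.inl hd2))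
  obtain ⟨α, hα⟩ : ∃ a, u.num.natAbs = p ^ a :=
    ⟨_, Nat.eq_prime_pow_of_unique_prime_dvd hnaz h1⟩
  have h2 : ∀ {q : ℕ}, q.Prime → q ∣ u.den → q = p := by
    intro q hq hdvd
    exact Finset.mem_singleton.1 (hpr q hq (Or.inr hdvd))
  obtain ⟨β, hβ⟩ : ∃ b, u.den = p ^ b :=
    ⟨_, Nat.eq_prime_pow_of_unique_prime_dvd u.den_nz h2⟩
  rcases Int.natAbs_eq u.num with hs | hs
  · refine ⟨true, α, β, ?_⟩
    rw [← Rat.num_div_den u, hs, hα, hβ]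
    push_cast
    simp
  · refine ⟨false, α, β, ?_⟩
    rw [← Rat.num_div_den u, hs, hα, hβ]
    push_cast
    ring

theorem stmt_9 (p : ℕ) (hp : p.Prime) (n : ℕ) (hn : 1 ≤ n) (u : Fin n → ℚ)
    (hu : ∀ i, IsSUnit {p} (u i)) (hsum : ∑ i, u i = 0)
    (hnd : ∀ t : Finset (Fin n), t.Nonempty → t ≠ Finset.univ →
      ∑ i ∈ t, u i ≠ 0) :
    n ≡ 2 [MOD p - 1] := by
  choose bb a b hub using fun i => unit_form hp (hu i)
  set K := Finset.univ.sup b with hK_def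
  have hbK : ∀ i, b i ≤ K := fun i => Finset.le_sup (Finset.mem_univ i)
  have hpne : (p:ℚ) ≠ 0 := Nat.cast_ne_zero.2 hp.ne_zero
  set g : Fin n → Bool × ℕ := fun i => (bb i, a i + (K - b i)) with hg_def
  have hval : ∀ i, ((sval p (g i) : ℤ) : ℚ) = u i * (p:ℚ)^K := by
    intro i
    have hab : a i + (K - b i) + b i = a i + K := by have := hbK i; omega
    have key : ∀ (ε : ℚ),
        ε * (p:ℚ)^(a i + (K - b i)) = ε * (p:ℚ)^(a i) / (p:ℚ)^(b i) * (p:ℚ)^K := by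
      intro ε
      rw [div_mul_eq_mul_div, eq_div_iff (pow_ne_zero _ hpne), mul_assoc, mul_assoc,
        ← pow_add, ← pow_add, hab]
    rw [hub i]
    show ((((if bb i then 1 else -1) : ℤ) * (p:ℤ) ^ (a i + (K - b i)) : ℤ) : ℚ) = _
    by_cases hbi : bb i = true
    · simp only [hbi, if_true]
      push_cast
      simpa using key 1
    · simp only [hbi, if_false]
      push_cast
      simpa using key (-1)
  set s : Multiset (Bool × ℕ) := Finset.univ.val.map g with hs_def
  have hcards : Multiset.card s = n := by simp [hs_def]
  have hsne : s ≠ 0 := by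
    intro h0
    rw [h0, Multiset.card_zero] at hcards
    omega
  have hmapsum : ∀ (T : Finset (Fin n)),
      ((T.val.map g).map (sval p)).sum = ∑ i ∈ T, sval p (g i) := by
    intro T
    rw [Multiset.map_map]
    rfl
  have hssum : (s.map (sval p)).sum = 0 := by
    rw [hs_def, hmapsum]
    have : ((∑ i, sval p (g i) : ℤ) : ℚ) = 0 := by
      push_cast
      calc (∑ i, ((sval p (g i) : ℤ) : ℚ)) = ∑ i, u i * (p:ℚ)^K := by
            exact Finset.sum_congr rfl fun i _ => hval i
        _ = (∑ i, u i) * (p:ℚ)^K := by rw [Finset.sum_mul]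
        _ = 0 := by rw [hsum, zero_mul]
    exact_mod_cast this
  have hsmin : ∀ t, t ≤ s → t ≠ 0 → t ≠ s → (t.map (sval p)).sum ≠ 0 := by
    intro t ht htne hts
    obtain ⟨t', ht', htmap⟩ := my_exists_of_le_map Finset.univ.val t ht
    have hnod : t'.Nodup := Multiset.nodup_of_le ht' Finset.univ.nodup
    set T : Finset (Fin n) := ⟨t', hnod⟩ with hT_def
    have hTne : T.Nonempty := by
      rw [Finset.nonempty_iff_ne_empty]
      intro h0
      apply htne
      have : t' = 0 := congrArg Finset.val h0
      rw [htmap, this]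
      simp
    have hTuniv : T ≠ Finset.univ := by
      intro h0
      apply hts
      have : t' = Finset.univ.val := congrArg Finset.val h0
      rw [htmap, this, hs_def]
    have hq := hnd T hTne hTuniv
    rw [htmap]
    show (Multiset.map (sval p) (Multiset.map g T.val)).sum ≠ 0
    rw [hmapsum]
    intro h0
    apply hq
    have h1 : ((∑ i ∈ T, sval p (g i) : ℤ) : ℚ) = 0 := by rw [h0]; simp
    rw [Int.cast_sum] at h1
    have h2 : (∑ i ∈ T, u i * (p:ℚ)^K) = 0 := by
      rw [← h1]
      exact Finset.sum_congr rfl fun i _ => (hval i).symm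
    rw [← Finset.sum_mul] at h2
    exact (mul_eq_zero.1 h2).resolve_right (pow_ne_zero _ hpne)
  have hfin := aux_key p hp (Multiset.card s) s le_rfl hsne hssum hsmin
  rwa [hcards] at hfin
end

section
/- Let p be a prime number and S = {p}. For every integer k > 1 with k ≡ 1 (mod p − 1) there exist positive S-units u_1, u_2, …, u_k such that u_1 + u_2 + ⋯ + u_k = 1 and u_i + u_{i+1} + ⋯ + u_j is not an S-unit for all 1 ≤ i < j ≤ k with (i, j) ≠ (1, k). In fact, writing d = (k − 1)/(p − 1), one may take u_1 = 1/p^d followed by p − 1 copies of 1/p^e for each e = 1, 2, …, d. -/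
/-- The explicit sequence: `u 1 = 1/p^d` with `d = (k-1)/(p-1)`, followed (for
`i = 2, …, k`) by `p - 1` copies of `1/p^e` for each `e = 1, 2, …, d`. -/
noncomputable def ruzsaSeq (p k : ℕ) : ℕ → ℚ := fun i =>
  if i = 1 then ((p : ℚ)) ^ (-(((k - 1) / (p - 1) : ℕ) : ℤ))
  else ((p : ℚ)) ^ (-(((i - 2) / (p - 1) + 1 : ℕ) : ℤ))

lemma num_rel (x : ℚ) (A B : ℤ) (h : x * (A:ℚ) = (B:ℚ)) :
    x.num * A = B * (x.den : ℤ) := by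
  have hd : (x.den : ℚ) ≠ 0 := by exact_mod_cast x.den_ne_zero
  have e : x * (x.den:ℚ) = (x.num:ℚ) := Rat.mul_den_eq_num x
  have h2 : (x.num : ℚ) * A = B * x.den := by
    rw [← e, mul_comm x (x.den:ℚ), mul_assoc, h]; ring
  exact_mod_cast h2

lemma not_sunit (p : ℕ) (hp : p.Prime) (E N : ℕ) (hN2 : 2 ≤ N) (hNp : ¬ p ∣ N)
    (x : ℚ) (hx : x * (p:ℚ)^E = (N:ℚ)) : ¬ IsSUnit {p} x := by
  intro h
  have hrel : x.num * (p:ℤ)^E = (N:ℤ) * (x.den:ℤ) := by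
    apply num_rel; push_cast; exact hx
  have hQp : N.minFac.Prime := Nat.minFac_prime (by omega)
  have hQN : N.minFac ∣ N := Nat.minFac_dvd N
  have hQne : N.minFac ≠ p := by intro hE; rw [hE] at hQN; exact hNp hQN
  have h1 : (N.minFac:ℤ) ∣ x.num * (p:ℤ)^E := by
    rw [hrel]; exact Dvd.dvd.mul_right (Int.natCast_dvd_natCast.mpr hQN) _
  have hQint : Prime (N.minFac:ℤ) := Nat.prime_iff_prime_int.mp hQp
  have h2 : (N.minFac:ℤ) ∣ x.num := by
    rcases hQint.dvd_mul.mp h1 with h' | h'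
    · exact h'
    · exfalso
      have h3 := hQint.dvd_of_dvd_pow h'
      rw [Int.natCast_dvd_natCast] at h3
      exact hQne ((Nat.prime_dvd_prime_iff_eq hQp hp).mp h3)
  have := h.2 N.minFac hQp (Or.inl h2)
  simp only [Finset.mem_singleton] at this
  exact hQne this

lemma sunit_zpow (p : ℕ) (hp : p.Prime) (e : ℕ) :
    IsSUnit {p} ((p:ℚ) ^ (-(e:ℤ))) := by
  have hp0 : (p:ℚ) ≠ 0 := Nat.cast_ne_zero.mpr hp.pos.ne'
  set x := (p:ℚ) ^ (-(e:ℤ)) with hxdef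
  have hx0 : x ≠ 0 := zpow_ne_zero _ hp0
  have hx : x * (p:ℚ)^e = 1 := by
    rw [hxdef, ← zpow_natCast (p:ℚ) e, ← zpow_add₀ hp0]
    simp
  have hrel : x.num * (p:ℤ)^e = 1 * (x.den:ℤ) := num_rel x _ 1 (by push_cast; exact hx)
  rw [one_mul] at hrel
  refine ⟨hx0, ?_⟩
  intro Q hQ hdvd
  simp only [Finset.mem_singleton]
  have hnum : (Q:ℤ) ∣ x.num → False := by
    intro hqn
    have hd : (Q:ℤ) ∣ (x.den:ℤ) := by rw [← hrel]; exact hqn.mul_right _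
    have h1 : Q ∣ x.num.natAbs := Int.natCast_dvd_natCast.mp (Int.dvd_natAbs.mpr hqn)
    have h2 : Q ∣ x.den := Int.natCast_dvd_natCast.mp hd
    have h3 : Q ∣ 1 := x.reduced ▸ Nat.dvd_gcd h1 h2
    exact hQ.one_lt.ne' (Nat.dvd_one.mp h3)
  rcases hdvd with h | h
  · exact (hnum h).elim
  · have hQd : (Q:ℤ) ∣ x.num * (p:ℤ)^e := by
      rw [hrel]; exact Int.natCast_dvd_natCast.mpr h
    have hQint : Prime (Q:ℤ) := Nat.prime_iff_prime_int.mp hQ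
    rcases hQint.dvd_mul.mp hQd with h' | h'
    · exact (hnum h').elim
    · have h3 := hQint.dvd_of_dvd_pow h'
      rw [Int.natCast_dvd_natCast] at h3
      exact (Nat.prime_dvd_prime_iff_eq hQ hp).mp h3

theorem stmt_10 (p : ℕ) (hp : p.Prime) (k : ℕ) (hk : 1 < k)
    (hmod : k ≡ 1 [MOD p - 1]) :
    ∃ u : ℕ → ℚ,
      u = ruzsaSeq p k ∧
      (∀ i ∈ Finset.Icc 1 k, 0 < u i ∧ IsSUnit {p} (u i)) ∧
      ∑ i ∈ Finset.Icc 1 k, u i = 1 ∧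
      (∀ i j : ℕ, 1 ≤ i → i < j → j ≤ k → (i, j) ≠ (1, k) →
        ¬ IsSUnit {p} (∑ l ∈ Finset.Icc i j, u l)) := by
  have hp2 : 2 ≤ p := hp.two_le
  have hP0 : (p:ℚ) ≠ 0 := Nat.cast_ne_zero.mpr (by omega)
  set q := p - 1 with hq
  have hq1 : 1 ≤ q := by omega
  have hdvd : q ∣ k - 1 := (Nat.modEq_iff_dvd' (by omega : 1 ≤ k)).mp hmod.symm
  obtain ⟨d, hd⟩ : ∃ d, (k - 1) / q = d := ⟨_, rfl⟩
  have hkd : k - 1 = d * q := by rw [← hd]; exact (Nat.div_mul_cancel hdvd).symm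
  have hd1 : 1 ≤ d := by
    rcases Nat.eq_zero_or_pos d with h | h
    · rw [h] at hkd; simp at hkd; omega
    · exact h
  obtain ⟨d', hd'⟩ : ∃ d', d = d' + 1 := ⟨d - 1, by omega⟩
  have hk2 : k - 2 = q * d' + (q - 1) := by
    have h1 : k - 1 = q * d' + q := by rw [hkd, hd']; ring
    omega
  have hu1 : ruzsaSeq p k 1 = (p:ℚ) ^ (-(d:ℤ)) := by
    simp only [ruzsaSeq, reduceIte, ← hq, hd]
  have hu2 : ∀ m : ℕ, m ≠ 1 → ruzsaSeq p k m = (p:ℚ) ^ (-(((m - 2)/q + 1 : ℕ) : ℤ)) := by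
    intro m hm; simp only [ruzsaSeq, if_neg hm, ← hq]
  -- partial sum formula
  have hF : ∀ m : ℕ, 2 ≤ m → ∑ l ∈ Finset.Icc 2 m, ruzsaSeq p k l
      = 1 - ((q - (m-2)%q : ℕ):ℚ) * (p:ℚ) ^ (-(((m-2)/q + 1 : ℕ) : ℤ)) := by
    intro m hm
    induction m, hm using Nat.le_induction with
    | base =>
      rw [Finset.Icc_self, Finset.sum_singleton, hu2 2 (by omega)]
      norm_num
      have hqc : (q:ℚ) + 1 = p := by exact_mod_cast (show q + 1 = p by omega)
      have hx' : (p:ℚ) * (p:ℚ)⁻¹ = 1 := mul_inv_cancel₀ hP0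
      linear_combination hx' + (p:ℚ)⁻¹ * hqc
    | succ m hm ih =>
      rw [Finset.sum_Icc_succ_top (by omega : 2 ≤ m + 1), ih, hu2 (m+1) (by omega)]
      obtain ⟨s, r, hs, hr, hdm, hrq⟩ :
          ∃ s r, (m-2)/q = s ∧ (m-2)%q = r ∧ q * s + r = m - 2 ∧ r < q :=
        ⟨_, _, rfl, rfl, Nat.div_add_mod _ _, Nat.mod_lt _ (by omega)⟩
      rw [hs, hr]
      have hm1 : m + 1 - 2 = q * s + (r + 1) := by omega
      by_cases hc : r + 1 < q
      · have hdiv : (m+1-2)/q = s := by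
          rw [hm1, Nat.mul_add_div (by omega)]
          simp [Nat.div_eq_of_lt hc]
        have hmod' : (m+1-2)%q = r + 1 := by
          rw [hm1, Nat.mul_add_mod]
          exact Nat.mod_eq_of_lt hc
        rw [hdiv, hmod', Nat.cast_sub (by omega : r + 1 ≤ q),
          Nat.cast_sub (by omega : r ≤ q)]
        push_cast
        ring
      · have hc' : r + 1 = q := by omega
        have hdiv : (m+1-2)/q = s + 1 := by
          rw [hm1, Nat.mul_add_div (by omega), hc', Nat.div_self (by omega)]
        have hmod' : (m+1-2)%q = 0 := by
          rw [hm1, Nat.mul_add_mod, hc', Nat.mod_self]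
        rw [hdiv, hmod', Nat.sub_zero, show q - r = 1 by omega, Nat.cast_one, one_mul]
        have hqc : (q:ℚ) + 1 = p := by exact_mod_cast (show q + 1 = p by omega)
        have hXY : (p:ℚ) ^ (-((s+1:ℕ):ℤ)) = (p:ℚ) * (p:ℚ) ^ (-((s+1+1:ℕ):ℤ)) := by
          rw [show (-((s+1:ℕ):ℤ)) = 1 + -((s+1+1:ℕ):ℤ) by push_cast; ring,
            zpow_add₀ hP0, zpow_one]
        rw [hXY]
        linear_combination ((p:ℚ) ^ (-((s+1+1:ℕ):ℤ))) * hqc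
  -- total sum
  have hsum : ∑ l ∈ Finset.Icc 1 k, ruzsaSeq p k l = 1 := by
    have hins : Finset.Icc 1 k = insert 1 (Finset.Icc 2 k) := by
      ext x; simp only [Finset.mem_Icc, Finset.mem_insert]; omega
    rw [hins, Finset.sum_insert (by simp), hu1, hF k (by omega)]
    have hdiv : (k-2)/q = d' := by
      rw [hk2, Nat.mul_add_div (by omega)]
      simp [Nat.div_eq_of_lt (by omega : q - 1 < q)]
    have hmod' : (k-2)%q = q - 1 := by
      rw [hk2, Nat.mul_add_mod, Nat.mod_eq_of_lt (by omega)]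
    rw [hdiv, hmod', show q - (q-1) = 1 by omega, hd']
    push_cast
    ring
  refine ⟨ruzsaSeq p k, rfl, ?_, hsum, ?_⟩
  · intro i hi
    by_cases h1 : i = 1
    · subst h1; rw [hu1]
      exact ⟨zpow_pos (by exact_mod_cast Nat.pos_of_ne_zero (by omega)) _, sunit_zpow p hp d⟩
    · rw [hu2 i h1]
      exact ⟨zpow_pos (by exact_mod_cast Nat.pos_of_ne_zero (by omega)) _, sunit_zpow p hp _⟩
  · intro i j hi hij hjk hne
    by_cases hi1 : i = 1
    · -- case i = 1
      subst hi1
      have hjklt : j < k := by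
        rcases lt_or_eq_of_le hjk with h | h
        · exact h
        · exact absurd (by rw [h]) hne
      have hins : Finset.Icc 1 j = insert 1 (Finset.Icc 2 j) := by
        ext x; simp only [Finset.mem_Icc, Finset.mem_insert]; omega
      rw [hins, Finset.sum_insert (by simp), hu1, hF j (by omega)]
      obtain ⟨s, r, hs, hr, hdm, hrq⟩ :
          ∃ s r, (j-2)/q = s ∧ (j-2)%q = r ∧ q * s + r = j - 2 ∧ r < q :=
        ⟨_, _, rfl, rfl, Nat.div_add_mod _ _, Nat.mod_lt _ (by omega)⟩
      rw [hs, hr]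
      have hsd : s + 1 ≤ d := by
        have h3 : q * s < q * d := by
          have e1 : q * d = d * q := Nat.mul_comm q d
          omega
        have := Nat.lt_of_mul_lt_mul_left h3
        omega
      have hsplit : p ^ d = p^(s+1) * p^(d-1-s) := by
        rw [← pow_add]; congr 1; omega
      have hple : p ≤ p^(s+1) := by
        calc p = p^1 := (pow_one p).symm
        _ ≤ p^(s+1) := Nat.pow_le_pow_right (by omega) (by omega)
      have hpd1 : 1 ≤ p^(d-1-s) := Nat.one_le_pow _ _ (by omega)
      have hX : (q - r) * p^(d-1-s) ≤ q * p^(d-1-s) := Nat.mul_le_mul_right _ (by omega)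
      have hqd : q * p^(d-1-s) + p^(d-1-s) ≤ p^d := by
        rw [hsplit]
        calc q * p^(d-1-s) + p^(d-1-s) = (q+1) * p^(d-1-s) := by ring
        _ ≤ p^(s+1) * p^(d-1-s) := Nat.mul_le_mul_right _ (by omega)
      have hN2 : 2 ≤ 1 + p^d - (q - r) * p^(d - 1 - s) := by omega
      have hpled : p ≤ p ^ d := by
        calc p = p^1 := (pow_one p).symm
        _ ≤ p^d := Nat.pow_le_pow_right (by omega) (by omega)
      have hNp : ¬ p ∣ 1 + p^d - (q - r) * p^(d - 1 - s) := by
        by_cases hcase : s + 1 = d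
        · have h0 : d - 1 - s = 0 := by omega
          have hsd2 : s = d' := by omega
          have hqsd : q * s = q * d' := by rw [hsd2]
          have hr2 : r + 2 ≤ q := by omega
          intro hdvd
          rw [h0, pow_zero, mul_one] at hdvd
          have hpd : p ∣ p ^ d := dvd_pow_self p (by omega)
          have h5 : p ∣ q - r - 1 := by
            have h6 := Nat.dvd_sub hpd hdvd
            rwa [show p^d - (1 + p^d - (q-r)) = q - r - 1 by omega] at h6
          have := Nat.le_of_dvd (by omega) h5
          omega
        · have hpd : p ∣ p ^ d := dvd_pow_self p (by omega)
          have hpX : p ∣ (q - r) * p^(d-1-s) :=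
            Dvd.dvd.mul_left (dvd_pow_self p (by omega)) _
          intro hdvd
          have h9 : p ∣ 1 + p^d - (q-r)*p^(d-1-s) + (q-r)*p^(d-1-s) :=
            Nat.dvd_add hdvd hpX
          have h8 : p ∣ 1 := by
            have h10 := Nat.dvd_sub h9 hpd
            rwa [show 1 + p^d - (q-r)*p^(d-1-s) + (q-r)*p^(d-1-s) - p^d = 1 by omega] at h10
          exact absurd (Nat.le_of_dvd one_pos h8) (by omega)
      refine not_sunit p hp d _ hN2 hNp _ ?_
      simp only [zpow_neg, zpow_natCast]
      push_cast [Nat.cast_sub (show (q-r)*p^(d-1-s) ≤ 1 + p^d by omega),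
        Nat.cast_sub (show r ≤ q by omega)]
      rw [show (p:ℚ)^d = (p:ℚ)^(s+1) * (p:ℚ)^(d-1-s) by rw [← pow_add]; congr 1; omega]
      field_simp
      ring
    · by_cases hi2 : i = 2
      · -- case i = 2
        subst hi2
        rw [hF j (by omega)]
        obtain ⟨s, r, hs, hr, hdm, hrq⟩ :
            ∃ s r, (j-2)/q = s ∧ (j-2)%q = r ∧ q * s + r = j - 2 ∧ r < q :=
          ⟨_, _, rfl, rfl, Nat.div_add_mod _ _, Nat.mod_lt _ (by omega)⟩
        rw [hs, hr]
        have hple : p ≤ p^(s+1) := by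
          calc p = p^1 := (pow_one p).symm
          _ ≤ p^(s+1) := Nat.pow_le_pow_right (by omega) (by omega)
        have hN2 : 2 ≤ p^(s+1) - (q - r) := by
          by_cases hs0 : s = 0
          · rw [hs0] at hdm
            have hr1 : 1 ≤ r := by omega
            have he : p^(s+1) = p := by rw [hs0, pow_one]
            omega
          · have h2 : p^2 ≤ p^(s+1) := Nat.pow_le_pow_right (by omega) (by omega)
            have h3 : p*p = p^2 := (sq p).symm
            have h4 : 2*p ≤ p*p := Nat.mul_le_mul_right p (by omega)
            omega
        have hNp : ¬ p ∣ p^(s+1) - (q - r) := by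
          intro hdvd
          have hpp : p ∣ p^(s+1) := dvd_pow_self p (by omega)
          have h5 : p ∣ q - r := by
            have h6 := Nat.dvd_sub hpp hdvd
            rwa [show p^(s+1) - (p^(s+1) - (q - r)) = q - r by omega] at h6
          have := Nat.le_of_dvd (by omega) h5
          omega
        refine not_sunit p hp (s+1) _ hN2 hNp _ ?_
        simp only [zpow_neg, zpow_natCast]
        push_cast [Nat.cast_sub (show q - r ≤ p^(s+1) by omega),
          Nat.cast_sub (show r ≤ q by omega)]
        field_simp
      · -- case i ≥ 3
        have hi3 : 3 ≤ i := by omega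
        have hsdiff : Finset.Icc i j = Finset.Icc 2 j \ Finset.Icc 2 (i-1) := by
          ext x; simp only [Finset.mem_Icc, Finset.mem_sdiff, not_and, not_le]; omega
        rw [hsdiff, Finset.sum_sdiff_eq_sub (Finset.Icc_subset_Icc le_rfl (by omega)),
          hF j (by omega), hF (i-1) (by omega)]
        obtain ⟨s, r, hs, hr, hdm, hrq⟩ :
            ∃ s r, (j-2)/q = s ∧ (j-2)%q = r ∧ q * s + r = j - 2 ∧ r < q :=
          ⟨_, _, rfl, rfl, Nat.div_add_mod _ _, Nat.mod_lt _ (by omega)⟩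
        obtain ⟨s', r', hs', hr', hdm', hrq'⟩ :
            ∃ s' r', (i-1-2)/q = s' ∧ (i-1-2)%q = r' ∧ q * s' + r' = i-1-2 ∧ r' < q :=
          ⟨_, _, rfl, rfl, Nat.div_add_mod _ _, Nat.mod_lt _ (by omega)⟩
        rw [hs, hr, hs', hr']
        have hss' : s' ≤ s := by
          rw [← hs, ← hs']; exact Nat.div_le_div_right (by omega)
        by_cases hEq : s' = s
        · rw [hEq] at hdm' ⊢
          have hrr : r' + 2 ≤ r := by omega
          have hN2 : 2 ≤ r - r' := by omega
          have hNp : ¬ p ∣ r - r' := by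
            intro hdvd
            have := Nat.le_of_dvd (by omega) hdvd
            omega
          refine not_sunit p hp (s+1) _ hN2 hNp _ ?_
          simp only [zpow_neg, zpow_natCast]
          push_cast [Nat.cast_sub (show r' ≤ r by omega),
            Nat.cast_sub (show r ≤ q by omega), Nat.cast_sub (show r' ≤ q by omega)]
          field_simp
          ring
        · have hlt : s' < s := by omega
          have hple : p ≤ p^(s-s') := by
            calc p = p^1 := (pow_one p).symm
            _ ≤ p^(s-s') := Nat.pow_le_pow_right (by omega) (by omega)
          have h1r : 1 ≤ q - r' := by omega
          have hX1 : p^(s-s') ≤ (q - r')*p^(s-s') :=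
            Nat.le_mul_of_pos_left _ (by omega)
          have hN2 : 2 ≤ (q - r') * p^(s - s') - (q - r) := by
            by_cases hd2 : s - s' = 1
            · by_contra hNlt
              push_neg at hNlt
              rw [hd2, pow_one] at hNlt
              have hqr1 : q - r' = 1 := by
                by_contra hx
                have h2 : 2 ≤ q - r' := by omega
                have h3 : 2*p ≤ (q-r')*p := Nat.mul_le_mul_right p h2
                omega
              have h4 : (q - r')*p = p := by rw [hqr1, one_mul]
              have hr0 : r = 0 := by omega
              have h5 : q * s = q * s' + q := by rw [show s = s' + 1 by omega]; ring
              omega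
            · have hd22 : 2 ≤ s - s' := by omega
              have h2 : p^2 ≤ p^(s-s') := Nat.pow_le_pow_right (by omega) hd22
              have h3 : p*p = p^2 := (sq p).symm
              have h4 : 2*p ≤ p*p := Nat.mul_le_mul_right p (by omega)
              omega
          have hNp : ¬ p ∣ (q - r') * p^(s - s') - (q - r) := by
            intro hdvd
            have hpp : p ∣ (q - r') * p^(s-s') :=
              Dvd.dvd.mul_left (dvd_pow_self p (by omega)) _
            have h5 : p ∣ q - r := by
              have h6 := Nat.dvd_sub hpp hdvd
              rwa [show (q-r')*p^(s-s') - ((q-r')*p^(s-s') - (q-r)) = q - r by omega] at h6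
            have := Nat.le_of_dvd (by omega) h5
            omega
          refine not_sunit p hp (s+1) _ hN2 hNp _ ?_
          simp only [zpow_neg, zpow_natCast]
          push_cast [Nat.cast_sub (show q - r ≤ (q-r')*p^(s-s') by omega),
            Nat.cast_sub (show r ≤ q by omega), Nat.cast_sub (show r' ≤ q by omega)]
          rw [show (p:ℚ)^(s+1) = (p:ℚ)^(s'+1) * (p:ℚ)^(s-s') by rw [← pow_add]; congr 1; omega]
          field_simp
          ring
end

section
/- Let S = {p_1, p_2, …, p_d} be a finite nonempty set of primes. For every positive integer k of the form k = a_1(p_1 − 1) + a_2(p_2 − 1) + ⋯ + a_d(p_d − 1) + 1 with nonnegative integers a_1, …, a_d, there exist positive S-units u_1, u_2, …, u_k such that u_1 + u_2 + ⋯ + u_k = 1. -/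
lemma sunit_div {S : Finset ℕ} {x : ℚ} (hx : IsSUnit S x) {q : ℕ} (hq : q.Prime)
    (hqS : q ∈ S) : IsSUnit S (x / q) := by
  have hq0 : (q : ℚ) ≠ 0 := Nat.cast_ne_zero.mpr hq.ne_zero
  refine ⟨div_ne_zero hx.1 hq0, ?_⟩
  have hrepr : x / q = Rat.divInt x.num ((x.den : ℤ) * q) := by
    rw [Rat.divInt_eq_div]
    push_cast
    rw [div_mul_eq_div_div, Rat.num_div_den]
  have hb0 : ((x.den : ℤ) * q) ≠ 0 :=
    mul_ne_zero (Int.natCast_ne_zero.mpr x.den_nz) (Int.natCast_ne_zero.mpr hq.ne_zero)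
  intro r hr hdvd
  rcases hdvd with h | h
  · have : (r : ℤ) ∣ x.num := dvd_trans h (by rw [hrepr]; exact Rat.num_dvd _ hb0)
    exact hx.2 r hr (Or.inl this)
  · have hden : ((x / q).den : ℤ) ∣ (x.den : ℤ) * q := by
      rw [hrepr]; exact Rat.den_dvd _ _
    have : (r : ℤ) ∣ (x.den : ℤ) * q := dvd_trans (Int.natCast_dvd_natCast.mpr h) hden
    have : r ∣ x.den * q := by exact_mod_cast this
    rcases (Nat.Prime.dvd_mul hr).mp this with h' | h'
    · exact hx.2 r hr (Or.inr h')
    · rwa [(Nat.prime_dvd_prime_iff_eq hr hq).mp h']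

lemma multiset_step {d : ℕ} (p : Fin d → ℕ) (hp : ∀ i, (p i).Prime) (n : ℕ) :
    ∀ a : Fin d → ℕ, (∑ i, a i) = n →
    ∃ M : Multiset ℚ, Multiset.card M = ∑ i, a i * (p i - 1) + 1 ∧
      (∀ u ∈ M, 0 < u ∧ IsSUnit (Finset.univ.image p) u) ∧ M.sum = 1 := by
  induction n with
  | zero =>
    intro a ha
    have h0 : ∀ i, a i = 0 := by
      intro i
      exact Finset.sum_eq_zero_iff.mp ha i (Finset.mem_univ i)
    refine ⟨{1}, by simp [h0], ?_, by simp⟩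
    intro u hu
    rw [Multiset.mem_singleton] at hu
    subst hu
    refine ⟨one_pos, one_ne_zero, ?_⟩
    intro r hr hdvd
    rcases hdvd with h | h
    · rw [Rat.num_one] at h
      have h1 : (r : ℤ) ≤ 1 := Int.le_of_dvd one_pos h
      have := hr.two_le
      omega
    · rw [Rat.den_one] at h
      exact absurd (Nat.eq_one_of_dvd_one h) hr.one_lt.ne'
  | succ n ih =>
    intro a ha
    have : ∃ j, a j ≠ 0 := by
      by_contra h
      push_neg at h
      simp [h] at ha
    obtain ⟨j, hj⟩ := this
    set a' : Fin d → ℕ := Function.update a j (a j - 1) with ha'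
    have hsum' : (∑ i, a' i) = n := by
      have h1 : ∑ i, a' i = (a j - 1) + ∑ i ∈ Finset.univ \ {j}, a i := by
        rw [ha', Finset.sum_update_of_mem (Finset.mem_univ j)]
      have h2 : ∑ i ∈ (Finset.univ).erase j, a i + a j = ∑ i, a i :=
        Finset.sum_erase_add _ _ (Finset.mem_univ j)
      rw [Finset.sdiff_singleton_eq_erase] at h1
      omega
    obtain ⟨M, hcard, hmem, hsum⟩ := ih a' hsum'
    have hMne : M ≠ 0 := by
      intro h; rw [h] at hcard; simp at hcard
    obtain ⟨x, hx⟩ := Multiset.exists_mem_of_ne_zero hMne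
    have hxpos := (hmem x hx).1
    have hxS := (hmem x hx).2
    have hpj := hp j
    have hpjS : p j ∈ Finset.univ.image p := Finset.mem_image_of_mem p (Finset.mem_univ j)
    refine ⟨Multiset.replicate (p j) (x / p j) + M.erase x, ?_, ?_, ?_⟩
    · rw [Multiset.card_add, Multiset.card_replicate, Multiset.card_erase_of_mem hx, hcard]
      have h1 : ∑ i, a' i * (p i - 1)
          = ∑ i ∈ (Finset.univ).erase j, a i * (p i - 1) + (a j - 1) * (p j - 1) := by
        rw [← Finset.sum_erase_add _ _ (Finset.mem_univ j)]
        congr 1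
        · refine Finset.sum_congr rfl fun i hi => ?_
          rw [ha', Function.update_of_ne (Finset.mem_erase.mp hi).1]
        · rw [ha', Function.update_self]
      have h2 : ∑ i ∈ (Finset.univ).erase j, a i * (p i - 1) + a j * (p j - 1)
          = ∑ i, a i * (p i - 1) :=
        Finset.sum_erase_add _ _ (Finset.mem_univ j)
      have h3 : a j * (p j - 1) = (a j - 1) * (p j - 1) + (p j - 1) := by
        obtain ⟨m, hm⟩ := Nat.exists_eq_succ_of_ne_zero hj
        rw [hm]
        simp [Nat.succ_sub_one, Nat.succ_mul]
      have h4 : 2 ≤ p j := hpj.two_le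
      simp only [Nat.pred_succ]
      omega
    · intro u hu
      rw [Multiset.mem_add] at hu
      rcases hu with hu | hu
      · rw [Multiset.eq_of_mem_replicate hu]
        constructor
        · exact div_pos hxpos (by exact_mod_cast hpj.pos)
        · exact sunit_div hxS hpj hpjS
      · exact hmem u (Multiset.mem_of_mem_erase hu)
    · rw [Multiset.sum_add, Multiset.sum_replicate]
      have herase : x + (M.erase x).sum = M.sum := by
        rw [← Multiset.sum_cons, Multiset.cons_erase hx]
      have hpj0 : (p j : ℚ) ≠ 0 := Nat.cast_ne_zero.mpr hpj.ne_zero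
      rw [nsmul_eq_mul, mul_div_cancel₀ _ hpj0]
      linarith [hsum]

theorem stmt_11 (d : ℕ) (hd : 0 < d) (p : Fin d → ℕ) (hp : ∀ i, (p i).Prime)
    (hinj : Function.Injective p) (a : Fin d → ℕ) (k : ℕ)
    (hk : k = ∑ i, a i * (p i - 1) + 1) :
    ∃ u : Fin k → ℚ,
      (∀ i, 0 < u i ∧ IsSUnit (Finset.univ.image p) (u i)) ∧ ∑ i, u i = 1 := by
  obtain ⟨M, hcard, hmem, hsum⟩ := multiset_step p hp (∑ i, a i) a rfl
  set l := M.toList with hl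
  have hlen : l.length = k := by
    rw [hl, Multiset.length_toList, hcard, hk]
  refine ⟨fun i => l.get (Fin.cast hlen.symm i), ?_, ?_⟩
  · intro i
    apply hmem
    rw [← Multiset.mem_toList]
    apply List.get_mem
  · have : ∑ i : Fin k, l.get (Fin.cast hlen.symm i) = ∑ i : Fin l.length, l.get i :=
      Fintype.sum_equiv (finCongr hlen.symm) _ _ (fun i => rfl)
    rw [this, ← List.sum_ofFn, List.ofFn_get, hl, Multiset.sum_toList, hsum]
end

section
/- Let p be a prime and let u_1, u_2, …, u_n be nonzero integers such that each |u_i| is a power of p (i.e. u_i = ± p^{k_i} with k_i ≥ 0), u_1 + u_2 + ⋯ + u_n = 0, and no nonempty proper subfamily of the u_i sums to 0. Then either exactly one of the u_i is negative or exactly one of the u_i is positive. -/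
open Multiset

private lemma le_map_exists {α β : Type*} [DecidableEq β] {f : α → β} :
    ∀ (s : Multiset α) (t : Multiset β), t ≤ s.map f → ∃ s' ≤ s, s'.map f = t := by
  intro s
  induction s using Multiset.induction_on with
  | empty =>
    intro t ht
    rw [Multiset.map_zero, Multiset.le_zero] at ht
    exact ⟨0, le_refl _, by simp [ht]⟩
  | cons a s ih =>
    intro t ht
    rw [Multiset.map_cons] at ht
    by_cases hfa : f a ∈ t
    · have h1 : t.erase (f a) ≤ Multiset.map f s := by
        have h2 := Multiset.erase_le_erase (f a) ht
        rwa [Multiset.erase_cons_head] at h2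
      obtain ⟨s', hs', hmap⟩ := ih _ h1
      exact ⟨a ::ₘ s', Multiset.cons_le_cons a hs',
        by rw [Multiset.map_cons, hmap, Multiset.cons_erase hfa]⟩
    · rw [Multiset.le_cons_of_notMem hfa] at ht
      obtain ⟨s', hs', hmap⟩ := ih _ ht
      exact ⟨s', le_trans hs' (Multiset.le_cons_self _ _), hmap⟩

private lemma dvd_sum_sub {d e : ℤ} (he : e ≠ -e) :
    ∀ (s : Multiset ℤ), (∀ x ∈ s, x = e ∨ x = -e ∨ d ∣ x) →
      d ∣ s.sum - (((s.count e : ℤ)) - ((s.count (-e) : ℤ))) * e := by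
  intro s
  induction s using Multiset.induction_on with
  | empty => simp
  | cons x s ih =>
    intro h
    have hs := ih (fun y hy => h y (Multiset.mem_cons_of_mem hy))
    rw [Multiset.sum_cons]
    by_cases h1 : x = e
    · subst h1
      rw [Multiset.count_cons_self, Multiset.count_cons_of_ne (Ne.symm he)]
      convert hs using 1
      push_cast
      ring
    · by_cases h2 : x = -e
      · subst h2
        rw [Multiset.count_cons_of_ne he, Multiset.count_cons_self]
        convert hs using 1
        push_cast
        ring
      · have hx : d ∣ x := by
          rcases h x (Multiset.mem_cons_self x s) with h' | h' | h'
          · exact absurd h' h1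
          · exact absurd h' h2
          · exact h'
        rw [Multiset.count_cons_of_ne (fun hc => h1 hc.symm),
          Multiset.count_cons_of_ne (fun hc => h2 hc.symm)]
        have : x + s.sum - ((s.count e : ℤ) - (s.count (-e) : ℤ)) * e
            = x + (s.sum - ((s.count e : ℤ) - (s.count (-e) : ℤ)) * e) := by ring
        rw [this]
        exact dvd_add hx hs

private lemma step (p : ℕ) (hp : p.Prime) (s : Multiset ℤ) (m : ℕ)
    (IH : ∀ s' : Multiset ℤ, Multiset.card s' < Multiset.card s →
      (∀ x ∈ s', ∃ k : ℕ, x = (p:ℤ)^k ∨ x = -((p:ℤ)^k)) → s'.sum = 0 →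
      (∀ t ≤ s', t ≠ 0 → t ≠ s' → t.sum ≠ 0) →
      Multiset.card (s'.filter (fun x => 0 < x)) ≤ 1 ∨
        Multiset.card (s'.filter (fun x => x < 0)) ≤ 1)
    (hpow : ∀ x ∈ s, ∃ k : ℕ, x = (p:ℤ)^k ∨ x = -((p:ℤ)^k))
    (hsum : s.sum = 0)
    (hmin : ∀ t ≤ s, t ≠ 0 → t ≠ s → t.sum ≠ 0)
    (habs : ∀ x ∈ s, (p:ℤ)^m ≤ |x|)
    (hab : s.count (-((p:ℤ)^m)) + p ≤ s.count ((p:ℤ)^m))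
    (hpos : 2 ≤ Multiset.card (s.filter (fun x => 0 < x)))
    (hneg : 2 ≤ Multiset.card (s.filter (fun x => x < 0))) : False := by
  have hp2 : 2 ≤ p := hp.two_le
  have hppos : (0:ℤ) < (p:ℤ) := by exact_mod_cast hp.pos
  have hpm : (0:ℤ) < (p:ℤ)^m := by positivity
  set e : ℤ := (p:ℤ)^m with he
  have rep_le : Multiset.replicate p e ≤ s :=
    Multiset.le_count_iff_replicate_le.mp (le_trans (Nat.le_add_left _ _) hab)
  have hsub : s - Multiset.replicate p e + Multiset.replicate p e = s :=
    tsub_add_cancel_of_le rep_le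
  have hcards : Multiset.card s = Multiset.card (s - Multiset.replicate p e) + p := by
    have h := congrArg Multiset.card hsub
    rw [Multiset.card_add, Multiset.card_replicate] at h
    omega
  set s' : Multiset ℤ := ((p:ℤ)^(m+1)) ::ₘ (s - Multiset.replicate p e) with hs'
  have hcard' : Multiset.card s' < Multiset.card s := by
    rw [hs', Multiset.card_cons]
    omega
  have hsumrep : (Multiset.replicate p e).sum = (p:ℤ) * e := by
    rw [Multiset.sum_replicate, nsmul_eq_mul]
  have h2 : (s - Multiset.replicate p e).sum + (p:ℤ) * e = 0 := by
    have h := congrArg Multiset.sum hsub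
    rw [Multiset.sum_add, hsumrep, hsum] at h
    exact h
  have hsum' : s'.sum = 0 := by
    rw [hs', Multiset.sum_cons, pow_succ]
    have : (p:ℤ)^m = e := he.symm
    rw [this]
    linarith [h2]
  have hpow' : ∀ x ∈ s', ∃ k : ℕ, x = (p:ℤ)^k ∨ x = -((p:ℤ)^k) := by
    intro x hx
    rw [hs', Multiset.mem_cons] at hx
    rcases hx with h | h
    · exact ⟨m+1, Or.inl h⟩
    · exact hpow x (Multiset.mem_of_le (tsub_le_self) h)
  have hmin' : ∀ t ≤ s', t ≠ 0 → t ≠ s' → t.sum ≠ 0 := by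
    intro t ht htne htns hts0
    by_cases hmem : ((p:ℤ)^(m+1)) ∈ t
    · set t' : Multiset ℤ := t.erase ((p:ℤ)^(m+1)) + Multiset.replicate p e with ht'
      have h1 : t.erase ((p:ℤ)^(m+1)) ≤ s - Multiset.replicate p e := by
        have h := Multiset.erase_le_erase ((p:ℤ)^(m+1)) ht
        rwa [hs', Multiset.erase_cons_head] at h
      have h2' : t' ≤ s := by
        rw [ht', ← hsub]
        exact add_le_add h1 le_rfl
      have h3 : t'.sum = 0 := by
        rw [ht', Multiset.sum_add, hsumrep]
        have h4 : ((p:ℤ)^(m+1)) ::ₘ t.erase ((p:ℤ)^(m+1)) = t := Multiset.cons_erase hmem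
        have h5 := congrArg Multiset.sum h4
        rw [Multiset.sum_cons, hts0] at h5
        have hps : ((p:ℤ))^(m+1) = e * p := by rw [he, ← pow_succ]
        linarith [h5, hps]
      have hct' : Multiset.card t' = Multiset.card (t.erase ((p:ℤ)^(m+1))) + p := by
        rw [ht', Multiset.card_add, Multiset.card_replicate]
      have h6 : t' ≠ 0 := by
        intro hc
        have h7 := hct'
        rw [hc, Multiset.card_zero] at h7
        omega
      have hctlt : Multiset.card t < Multiset.card s' :=
        Multiset.card_lt_card (lt_of_le_of_ne ht htns)
      have h10 : 0 < Multiset.card t := Multiset.card_pos_iff_exists_mem.mpr ⟨_, hmem⟩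
      have h8 : t' ≠ s := by
        intro hc
        have h9 : Multiset.card t' = Multiset.card s := by rw [hc]
        rw [hct', Multiset.card_erase_of_mem hmem, Nat.pred_eq_sub_one] at h9
        rw [hs', Multiset.card_cons] at hctlt
        omega
      exact hmin t' h2' h6 h8 h3
    · rw [hs', Multiset.le_cons_of_notMem hmem] at ht
      have h2' : t ≤ s := le_trans ht (tsub_le_self)
      have h8 : t ≠ s := by
        intro hc
        have h9 := Multiset.card_le_card ht
        rw [hc] at h9
        omega
      exact hmin t h2' htne h8 hts0
  have hfilrepneg : Multiset.filter (fun x => x < 0) (Multiset.replicate p e) = 0 := by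
    rw [Multiset.filter_eq_nil]
    intro a ha
    have hae := Multiset.eq_of_mem_replicate ha
    rw [hae]
    simp only [not_lt]
    positivity
  have hnegeq : s'.filter (fun x => x < 0) = s.filter (fun x => x < 0) := by
    rw [hs', Multiset.filter_cons_of_neg _ (by simp only [not_lt]; positivity),
      Multiset.filter_sub, hfilrepneg, tsub_zero]
  rcases IH s' hcard' hpow' hsum' hmin' with hcase | hcase
  swap
  · rw [hnegeq] at hcase; omega
  have hrepfil : Multiset.replicate p e ≤ s.filter (fun x => 0 < x) := by
    apply Multiset.le_count_iff_replicate_le.mp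
    rw [Multiset.count_filter_of_pos hpm]
    exact le_trans (Nat.le_add_left _ _) hab
  have hfilreppos : Multiset.filter (fun x => 0 < x) (Multiset.replicate p e)
      = Multiset.replicate p e := by
    rw [Multiset.filter_eq_self]
    intro a ha
    have hae := Multiset.eq_of_mem_replicate ha
    rw [hae]
    exact hpm
  have hposeq : s'.filter (fun x => 0 < x)
      = ((p:ℤ)^(m+1)) ::ₘ (s.filter (fun x => 0 < x) - Multiset.replicate p e) := by
    rw [hs', Multiset.filter_cons_of_pos _ (by positivity), Multiset.filter_sub, hfilreppos]
  have hA : Multiset.card (s'.filter (fun x => 0 < x)) =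
      Multiset.card (s.filter (fun x => 0 < x)) - p + 1 := by
    rw [hposeq, Multiset.card_cons, Multiset.card_sub hrepfil, Multiset.card_replicate]
  have hple : p ≤ Multiset.card (s.filter (fun x => 0 < x)) := by
    have h := Multiset.card_le_card hrepfil
    rwa [Multiset.card_replicate] at h
  have hposcard : Multiset.card (s.filter (fun x => 0 < x)) ≤ p := by omega
  have haup : s.count e ≤ Multiset.card (s.filter (fun x => 0 < x)) := by
    have h2' : Multiset.replicate (s.count e) e ≤ s.filter (fun x => 0 < x) :=
      Multiset.le_count_iff_replicate_le.mp (by rw [Multiset.count_filter_of_pos hpm])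
    have h := Multiset.card_le_card h2'
    rwa [Multiset.card_replicate] at h
  -- so count e s = p, count (-e) s = 0
  have hae : s.count e = p := by omega
  have hbe : s.count (-e) = 0 := by omega
  -- positives are exactly replicate p e
  have hPeq : s.filter (fun x => 0 < x) = Multiset.replicate p e :=
    (Multiset.eq_of_le_of_card_le hrepfil
      (by rw [Multiset.card_replicate]; exact hposcard)).symm
  -- split s into positives and negatives
  have hnz : ∀ x ∈ s, x ≠ 0 := by
    intro x hx hc
    obtain ⟨k, hk | hk⟩ := hpow x hx
    · rw [hc] at hk; have : (0:ℤ) < (p:ℤ)^k := by positivity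
      omega
    · rw [hc] at hk; have : (0:ℤ) < (p:ℤ)^k := by positivity
      omega
  have hsplit : s.filter (fun x => 0 < x) + s.filter (fun x => x < 0) = s := by
    have h0 := Multiset.filter_add_not (fun x => 0 < x) s
    have h1 : s.filter (fun x => ¬ 0 < x) = s.filter (fun x => x < 0) :=
      Multiset.filter_congr (fun x hx =>
        ⟨fun h => lt_of_le_of_ne (not_lt.mp h) (hnz x hx), fun h => not_lt.mpr h.le⟩)
    rw [h1] at h0
    exact h0
  set N : Multiset ℤ := s.filter (fun x => x < 0) with hN
  have hNsum : N.sum = -((p:ℤ)^(m+1)) := by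
    have h := congrArg Multiset.sum hsplit
    rw [Multiset.sum_add, hPeq, hsumrep, hsum] at h
    rw [pow_succ]
    have : (p:ℤ)^m = e := he.symm
    rw [this]
    linarith [h]
  have hNle : ∀ x ∈ N, x ≤ -e := by
    intro x hx
    have hx2 := Multiset.mem_filter.mp hx
    have h := habs x hx2.1
    rw [abs_of_neg hx2.2] at h
    linarith
  by_cases hall : ∀ x ∈ N, x = -e
  · have hNrep : N = Multiset.replicate (Multiset.card N) (-e) :=
      Multiset.eq_replicate_card.mpr hall
    have hsum2 := hNsum
    rw [hNrep, Multiset.sum_replicate, nsmul_eq_mul, pow_succ] at hsum2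
    have hcN : (Multiset.card N : ℤ) * e = (p:ℤ) * e := by
      have : (p:ℤ)^m = e := he.symm
      rw [this] at hsum2
      linarith
    have hcNp : Multiset.card N = p := by
      have h := mul_right_cancel₀ (ne_of_gt hpm) hcN
      exact_mod_cast h
    have hb : s.count (-e) = Multiset.card N := by
      have h1 : N.count (-e) = s.count (-e) :=
        Multiset.count_filter_of_pos (by linarith)
      rw [← h1, hNrep, Multiset.count_replicate_self, Multiset.card_replicate]
    omega
  · push_neg at hall
    obtain ⟨x₀, hx₀N, hx₀ne⟩ := hall
    have hx₀s : x₀ ∈ s := Multiset.mem_of_le (Multiset.filter_le _ _) hx₀N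
    have hx₀neg : x₀ < 0 := (Multiset.mem_filter.mp hx₀N).2
    obtain ⟨k, hk | hk⟩ := hpow x₀ hx₀s
    · exfalso
      have : (0:ℤ) < (p:ℤ)^k := by positivity
      omega
    · have hpk : (0:ℤ) < (p:ℤ)^k := by positivity
      have h1 : e ≤ (p:ℤ)^k := by
        have h := habs x₀ hx₀s
        rwa [hk, abs_neg, abs_of_pos hpk] at h
      have h2' : e ≠ (p:ℤ)^k := fun hc => hx₀ne (by rw [hk, ← hc])
      have hmk : m < k := by
        by_contra hc
        push_neg at hc
        have h3 : (p:ℤ)^k ≤ (p:ℤ)^m :=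
          pow_le_pow_right₀ (by exact_mod_cast hp.one_le) hc
        exact h2' (le_antisymm h1 (by rw [he]; exact h3))
      have h3 : (p:ℤ)^(m+1) ≤ (p:ℤ)^k :=
        pow_le_pow_right₀ (by exact_mod_cast hp.one_le) hmk
      have hx₀le : x₀ ≤ -((p:ℤ)^(m+1)) := by rw [hk]; linarith
      have hcons : x₀ ::ₘ N.erase x₀ = N := Multiset.cons_erase hx₀N
      have hsum2 : N.sum = x₀ + (N.erase x₀).sum := by
        conv_lhs => rw [← hcons]
        rw [Multiset.sum_cons]
      have hsum3 : (N.erase x₀).sum ≤ (Multiset.card (N.erase x₀)) • (-e) :=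
        Multiset.sum_le_card_nsmul _ _ (fun y hy => hNle y (Multiset.mem_of_mem_erase hy))
      have hcarderase : 1 ≤ Multiset.card (N.erase x₀) := by
        rw [Multiset.card_erase_of_mem hx₀N, Nat.pred_eq_sub_one]
        have h5 : 2 ≤ Multiset.card N := hneg
        omega
      rw [nsmul_eq_mul] at hsum3
      have h4 : (Multiset.card (N.erase x₀) : ℤ) * (-e) ≤ 1 * (-e) :=
        mul_le_mul_of_nonpos_right (by exact_mod_cast hcarderase) (by linarith)
      rw [one_mul] at h4
      linarith [hNsum, hsum2, hsum3, h4, hx₀le, hpm]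

private lemma sum_map_neg' (s : Multiset ℤ) : (s.map (fun x => -x)).sum = -s.sum := by
  induction s using Multiset.induction_on with
  | empty => simp
  | cons a s ih => simp [ih]; ring

private lemma key (p : ℕ) (hp : p.Prime) :
    ∀ N : ℕ, ∀ s : Multiset ℤ, Multiset.card s ≤ N →
    (∀ x ∈ s, ∃ k : ℕ, x = (p:ℤ)^k ∨ x = -((p:ℤ)^k)) →
    s.sum = 0 →
    (∀ t ≤ s, t ≠ 0 → t ≠ s → t.sum ≠ 0) →
    Multiset.card (s.filter (fun x => 0 < x)) ≤ 1 ∨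
      Multiset.card (s.filter (fun x => x < 0)) ≤ 1 := by
  intro N
  induction N with
  | zero =>
    intro s hcard _ _ _
    have hs0 : s = 0 := Multiset.card_eq_zero.mp (Nat.le_zero.mp hcard)
    left
    simp [hs0]
  | succ N ihN =>
    intro s hcard hpow hsum hmin
    by_contra hcon
    push_neg at hcon
    obtain ⟨hpos, hneg⟩ := hcon
    have hpos : 2 ≤ Multiset.card (s.filter (fun x => 0 < x)) := hpos
    have hneg : 2 ≤ Multiset.card (s.filter (fun x => x < 0)) := hneg
    have hp2 : 2 ≤ p := hp.two_le
    have hppos : (0:ℤ) < (p:ℤ) := by exact_mod_cast hp.pos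
    -- minimum element
    have hs0 : s ≠ 0 := by
      intro hc
      rw [hc] at hpos
      simp at hpos
    have hsne : s.toFinset.Nonempty := by
      obtain ⟨x, hx⟩ := Multiset.exists_mem_of_ne_zero hs0
      exact ⟨x, Multiset.mem_toFinset.mpr hx⟩
    obtain ⟨x₀, hx₀mem', hx₀min'⟩ := s.toFinset.exists_min_image (fun x => x.natAbs) hsne
    have hx₀mem : x₀ ∈ s := Multiset.mem_toFinset.mp hx₀mem'
    have hx₀min : ∀ x ∈ s, x₀.natAbs ≤ x.natAbs :=
      fun x hx => hx₀min' x (Multiset.mem_toFinset.mpr hx)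
    obtain ⟨m, hm⟩ := hpow x₀ hx₀mem
    have hpm : (0:ℤ) < (p:ℤ)^m := by positivity
    have habs0 : |x₀| = (p:ℤ)^m := by
      rcases hm with h | h
      · rw [h, abs_of_pos hpm]
      · rw [h, abs_neg, abs_of_pos hpm]
    have habs : ∀ x ∈ s, (p:ℤ)^m ≤ |x| := by
      intro x hx
      have h := hx₀min x hx
      calc (p:ℤ)^m = |x₀| := habs0.symm
        _ = (x₀.natAbs : ℤ) := by rw [Int.abs_eq_natAbs]
        _ ≤ (x.natAbs : ℤ) := by exact_mod_cast h
        _ = |x| := by rw [Int.abs_eq_natAbs]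
    -- classification and divisibility
    have hclass : ∀ x ∈ s, x = (p:ℤ)^m ∨ x = -((p:ℤ)^m) ∨ ((p:ℤ)^(m+1)) ∣ x := by
      intro x hx
      obtain ⟨k, hk⟩ := hpow x hx
      have hpk : (0:ℤ) < (p:ℤ)^k := by positivity
      have h1 : (p:ℤ)^m ≤ (p:ℤ)^k := by
        have h := habs x hx
        rcases hk with h' | h'
        · rwa [h', abs_of_pos hpk] at h
        · rwa [h', abs_neg, abs_of_pos hpk] at h
      have hmle : m ≤ k := by
        by_contra hc
        push_neg at hc
        have h2 : (p:ℤ)^k ≤ (p:ℤ)^m :=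
          pow_le_pow_right₀ (by exact_mod_cast hp.one_le) hc.le
        have h3 : (p:ℤ)^m = (p:ℤ)^k := le_antisymm h1 h2
        have h4 : (p:ℤ)^k < (p:ℤ)^m := by
          apply pow_lt_pow_right₀ (by exact_mod_cast hp.one_lt) hc
        omega
      rcases eq_or_lt_of_le hmle with heq | hlt
      · rw [← heq] at hk
        rcases hk with h' | h'
        · exact Or.inl h'
        · exact Or.inr (Or.inl h')
      · right; right
        have hdk : (p:ℤ)^(m+1) ∣ (p:ℤ)^k := pow_dvd_pow _ hlt
        rcases hk with h' | h'
        · rw [h']; exact hdk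
        · rw [h']; exact dvd_neg.mpr hdk
    have hne : (p:ℤ)^m ≠ -((p:ℤ)^m) := by intro hc; omega
    have hdvd := dvd_sum_sub hne s hclass
    rw [hsum, zero_sub, dvd_neg] at hdvd
    have hpdvd : (p:ℤ) ∣ ((s.count ((p:ℤ)^m) : ℤ) - (s.count (-((p:ℤ)^m)) : ℤ)) := by
      rw [pow_succ] at hdvd
      have h2 : (p:ℤ)^m * (p:ℤ) ∣ (p:ℤ)^m *
          ((s.count ((p:ℤ)^m) : ℤ) - (s.count (-((p:ℤ)^m)) : ℤ)) := by
        rwa [mul_comm ((s.count ((p:ℤ)^m) : ℤ) - (s.count (-((p:ℤ)^m)) : ℤ)) ((p:ℤ)^m)] at hdvd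
      exact (mul_dvd_mul_iff_left (pow_ne_zero m (ne_of_gt hppos))).mp h2
    set a := s.count ((p:ℤ)^m) with ha
    set b := s.count (-((p:ℤ)^m)) with hb
    have hab1 : 1 ≤ a + b := by
      rcases hm with h | h
      · have : 0 < a := Multiset.count_pos.mpr (h ▸ hx₀mem)
        omega
      · have : 0 < b := Multiset.count_pos.mpr (h ▸ hx₀mem)
        omega
    -- split for cardinality
    have hnz : ∀ x ∈ s, x ≠ 0 := by
      intro x hx hc
      obtain ⟨k, hk | hk⟩ := hpow x hx
      · rw [hc] at hk
        have : (0:ℤ) < (p:ℤ)^k := by positivity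
        omega
      · rw [hc] at hk
        have : (0:ℤ) < (p:ℤ)^k := by positivity
        omega
    have hsplit : s.filter (fun x => 0 < x) + s.filter (fun x => x < 0) = s := by
      have h0 := Multiset.filter_add_not (fun x => 0 < x) s
      have h1 : s.filter (fun x => ¬ 0 < x) = s.filter (fun x => x < 0) :=
        Multiset.filter_congr (fun x hx =>
          ⟨fun h => lt_of_le_of_ne (not_lt.mp h) (hnz x hx), fun h => not_lt.mpr h.le⟩)
      rw [h1] at h0
      exact h0
    have hcards4 : 4 ≤ Multiset.card s := by
      have h := congrArg Multiset.card hsplit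
      rw [Multiset.card_add] at h
      omega
    have IH' : ∀ s' : Multiset ℤ, Multiset.card s' < Multiset.card s →
        (∀ x ∈ s', ∃ k : ℕ, x = (p:ℤ)^k ∨ x = -((p:ℤ)^k)) → s'.sum = 0 →
        (∀ t ≤ s', t ≠ 0 → t ≠ s' → t.sum ≠ 0) →
        Multiset.card (s'.filter (fun x => 0 < x)) ≤ 1 ∨
          Multiset.card (s'.filter (fun x => x < 0)) ≤ 1 := by
      intro s' hlt
      exact ihN s' (by omega)
    rcases lt_trichotomy a b with hlt | heqab | hgt
    · -- a < b : apply step to the negated multiset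
      set t : Multiset ℤ := s.map (fun x => -x) with htdef
      have hct : Multiset.card t = Multiset.card s := by rw [htdef, Multiset.card_map]
      have hinv : (t.map (fun x => -x)) = s := by
        rw [htdef, Multiset.map_map]
        simp
      have hpowt : ∀ x ∈ t, ∃ k : ℕ, x = (p:ℤ)^k ∨ x = -((p:ℤ)^k) := by
        intro x hx
        obtain ⟨y, hy, rfl⟩ := Multiset.mem_map.mp hx
        obtain ⟨k, hk | hk⟩ := hpow y hy
        · exact ⟨k, Or.inr (by rw [hk])⟩
        · exact ⟨k, Or.inl (by rw [hk, neg_neg])⟩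
      have hsumt : t.sum = 0 := by rw [htdef, sum_map_neg', hsum, neg_zero]
      have hmint : ∀ t' ≤ t, t' ≠ 0 → t' ≠ t → t'.sum ≠ 0 := by
        intro t' ht' h0 hnet hsum0
        have h1 : t'.map (fun x => -x) ≤ s := by
          have := Multiset.map_le_map (f := fun x : ℤ => -x) ht'
          rwa [hinv] at this
        have h2 : (t'.map (fun x => -x)).sum = 0 := by rw [sum_map_neg', hsum0, neg_zero]
        have h3 : t'.map (fun x => -x) ≠ 0 := by
          intro hc
          rw [Multiset.map_eq_zero] at hc
          exact h0 hc
        have h4 : t'.map (fun x => -x) ≠ s := by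
          intro hc
          apply hnet
          have := congrArg (Multiset.map (fun x : ℤ => -x)) hc
          rw [Multiset.map_map] at this
          simp at this
          rw [htdef]
          exact this
        exact hmin _ h1 h3 h4 h2
      have habst : ∀ x ∈ t, (p:ℤ)^m ≤ |x| := by
        intro x hx
        obtain ⟨y, hy, rfl⟩ := Multiset.mem_map.mp hx
        rw [abs_neg]
        exact habs y hy
      have hcounts1 : t.count ((p:ℤ)^m) = b := by
        have h := Multiset.count_map_eq_count' (fun x : ℤ => -x) s neg_injective (-((p:ℤ)^m))
        rw [htdef, hb]
        simpa using h
      have hcounts2 : t.count (-((p:ℤ)^m)) = a := by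
        have h := Multiset.count_map_eq_count' (fun x : ℤ => -x) s neg_injective ((p:ℤ)^m)
        rw [htdef, ha]
        simpa using h
      have habt : t.count (-((p:ℤ)^m)) + p ≤ t.count ((p:ℤ)^m) := by
        rw [hcounts1, hcounts2]
        have hd : (p:ℤ) ∣ ((b:ℤ) - (a:ℤ)) := by
          have := hpdvd
          rw [← dvd_neg] at this
          rw [ha, hb] at this ⊢
          convert this using 1
          · rfl
          ring
        have hle : (p:ℤ) ≤ (b:ℤ) - (a:ℤ) := Int.le_of_dvd (by omega) hd
        omega
      have hpost : 2 ≤ Multiset.card (t.filter (fun x => 0 < x)) := by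
        rw [htdef, Multiset.filter_map, Multiset.card_map]
        have : s.filter ((fun x : ℤ => 0 < x) ∘ (fun x : ℤ => -x)) = s.filter (fun x => x < 0) :=
          Multiset.filter_congr (fun x _ => by simp [Function.comp, neg_pos])
        rw [this]
        exact hneg
      have hnegt : 2 ≤ Multiset.card (t.filter (fun x => x < 0)) := by
        rw [htdef, Multiset.filter_map, Multiset.card_map]
        have : s.filter ((fun x : ℤ => x < 0) ∘ (fun x : ℤ => -x)) = s.filter (fun x => 0 < x) :=
          Multiset.filter_congr (fun x _ => by simp [Function.comp, neg_neg])
        rw [this]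
        exact hpos
      exact step p hp t m (by rw [hct]; exact IH') hpowt hsumt hmint habst habt hpost hnegt
    · -- a = b : both at least 1, pick a cancelling pair
      have ha1 : 1 ≤ a := by omega
      have hb1 : 1 ≤ b := by omega
      have hamem : ((p:ℤ)^m) ∈ s := Multiset.count_pos.mp (by omega)
      have hbmem : (-((p:ℤ)^m)) ∈ s := Multiset.count_pos.mp (by omega)
      have hbmem' : (-((p:ℤ)^m)) ∈ s.erase ((p:ℤ)^m) :=
        (Multiset.mem_erase_of_ne (Ne.symm hne)).mpr hbmem
      have hpair : ((p:ℤ)^m) ::ₘ {-((p:ℤ)^m)} ≤ s := by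
        have h2 : ({-((p:ℤ)^m)} : Multiset ℤ) ≤ s.erase ((p:ℤ)^m) :=
          Multiset.singleton_le.mpr hbmem'
        have h3 := Multiset.cons_le_cons ((p:ℤ)^m) h2
        rwa [Multiset.cons_erase hamem] at h3
      refine hmin _ hpair (by simp) ?_ (by simp)
      intro hc
      have := congrArg Multiset.card hc
      rw [Multiset.card_cons, Multiset.card_singleton] at this
      omega
    · -- a > b : apply step directly
      have habt : s.count (-((p:ℤ)^m)) + p ≤ s.count ((p:ℤ)^m) := by
        rw [← ha, ← hb]
        have hle : (p:ℤ) ≤ (a:ℤ) - (b:ℤ) :=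
          Int.le_of_dvd (by omega) hpdvd
        omega
      exact step p hp s m IH' hpow hsum hmin habs habt hpos hneg

theorem stmt_12 (p : ℕ) (hp : p.Prime) (n : ℕ) (hn : 2 ≤ n) (u : Fin n → ℤ)
    (hpow : ∀ i, ∃ k : ℕ, u i = (p : ℤ) ^ k ∨ u i = -((p : ℤ) ^ k))
    (hsum : ∑ i, u i = 0)
    (hnd : ∀ t : Finset (Fin n), t.Nonempty → t ≠ Finset.univ →
      ∑ i ∈ t, u i ≠ 0) :
    (∃! i, u i < 0) ∨ (∃! i, 0 < u i) := by
  classical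
  set s : Multiset ℤ := Finset.univ.val.map u with hs
  have hpow' : ∀ x ∈ s, ∃ k : ℕ, x = (p:ℤ)^k ∨ x = -((p:ℤ)^k) := by
    intro x hx
    obtain ⟨i, _, rfl⟩ := Multiset.mem_map.mp hx
    exact hpow i
  have hsum' : s.sum = 0 := by
    rw [hs, ← Finset.sum_eq_multiset_sum]
    exact hsum
  have hmin' : ∀ t ≤ s, t ≠ 0 → t ≠ s → t.sum ≠ 0 := by
    intro t ht h0 hne hsum0
    obtain ⟨t₀, ht₀, hmap⟩ := le_map_exists _ _ ht
    have hnodup : t₀.Nodup := Multiset.nodup_of_le ht₀ Finset.univ.nodup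
    set T : Finset (Fin n) := ⟨t₀, hnodup⟩ with hT
    have hTne : T.Nonempty := by
      rcases Multiset.exists_mem_of_ne_zero (fun hc : t₀ = 0 => h0 (by rw [← hmap, hc]; simp))
        with ⟨x, hx⟩
      exact ⟨x, hx⟩
    have hTnu : T ≠ Finset.univ := by
      intro hc
      apply hne
      rw [← hmap, hs]
      congr 1
      exact congrArg Finset.val hc
    apply hnd T hTne hTnu
    rw [Finset.sum_eq_multiset_sum]
    show (Multiset.map u t₀).sum = 0
    rw [hmap]
    exact hsum0
  have hkey := key p hp (Multiset.card s) s le_rfl hpow' hsum' hmin'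
  -- nonzero values
  have hnz : ∀ i, u i ≠ 0 := by
    intro i hc
    obtain ⟨k, hk | hk⟩ := hpow i
    · rw [hc] at hk
      have : (0:ℤ) < (p:ℤ)^k := pow_pos (by exact_mod_cast hp.pos) k
      omega
    · rw [hc] at hk
      have : (0:ℤ) < (p:ℤ)^k := pow_pos (by exact_mod_cast hp.pos) k
      omega
  have hune : (Finset.univ : Finset (Fin n)).Nonempty := ⟨⟨0, by omega⟩, Finset.mem_univ _⟩
  -- existence of a negative and a positive value
  have hexneg : ∃ i, u i < 0 := by
    by_contra hc
    push_neg at hc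
    have hall : ∀ i ∈ Finset.univ, 0 < u i :=
      fun i _ => lt_of_le_of_ne (hc i) (Ne.symm (hnz i))
    have := Finset.sum_pos hall hune
    omega
  have hexpos : ∃ i, 0 < u i := by
    by_contra hc
    push_neg at hc
    have hall : ∀ i ∈ Finset.univ, u i < 0 :=
      fun i _ => lt_of_le_of_ne (hc i) (hnz i)
    have := Finset.sum_neg hall hune
    omega
  -- pair bound: two distinct indices with property give filter card ≥ 2
  have hpair : ∀ (P : ℤ → Prop) [DecidablePred P] (i j : Fin n), i ≠ j → P (u i) → P (u j) →
      2 ≤ Multiset.card (s.filter P) := by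
    intro P _ i j hij hPi hPj
    have h1 : ({i, j} : Finset (Fin n)).val ≤ Finset.univ.val :=
      Finset.val_le_iff.mpr (Finset.subset_univ _)
    have h2 : ({i, j} : Finset (Fin n)).val = i ::ₘ {j} := by
      rw [Finset.insert_val_of_notMem (by simpa using hij)]
      rfl
    have h3 : Multiset.map u (i ::ₘ {j}) ≤ s := by
      rw [hs, ← h2]
      exact Multiset.map_le_map h1
    have h4 : Multiset.filter P (Multiset.map u (i ::ₘ {j})) = u i ::ₘ {u j} := by
      rw [Multiset.map_cons, Multiset.map_singleton,
        Multiset.filter_cons_of_pos _ hPi, Multiset.filter_singleton, if_pos hPj]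
    have h5 := Multiset.card_le_card (Multiset.filter_le_filter P h3)
    rw [h4] at h5
    simpa using h5
  rcases hkey with hcase | hcase
  · right
    obtain ⟨i₀, hi₀⟩ := hexpos
    refine ⟨i₀, hi₀, ?_⟩
    intro j hj
    by_contra hji
    have := hpair (fun x => 0 < x) j i₀ hji hj hi₀
    omega
  · left
    obtain ⟨i₀, hi₀⟩ := hexneg
    refine ⟨i₀, hi₀, ?_⟩
    intro j hj
    by_contra hji
    have := hpair (fun x => x < 0) j i₀ hji hj hi₀
    omega
end

section
/- Let p and q be primes with p > q, and let r be a positive integer. Then there exist positive integers α and β such that r·q^β > p^α > (r − 1)·q^β. -/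
open Real Set Filter

set_option maxHeartbeats 4000000 in
theorem stmt_13 (p q : ℕ) (hp : p.Prime) (hq : q.Prime) (hpq : q < p)
    (r : ℕ) (hr : 0 < r) :
    ∃ α β : ℕ, 0 < α ∧ 0 < β ∧
      r * q ^ β > p ^ α ∧ p ^ α > (r - 1) * q ^ β := by
  have hq2 : 2 ≤ q := hq.two_le
  have hp2 : 2 ≤ p := hp.two_le
  set a : ℝ := Real.log p with ha_def
  set b : ℝ := Real.log q with hb_def
  have ha : 0 < a := Real.log_pos (by exact_mod_cast hp.one_lt)
  have hb : 0 < b := Real.log_pos (by exact_mod_cast hq.one_lt)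
  rcases eq_or_lt_of_le (show 1 ≤ r from hr) with h1 | hr2
  · -- r = 1
    refine ⟨1, p, one_pos, hp.pos, ?_, ?_⟩
    · have h2 : p < 2 ^ p := Nat.lt_two_pow_self
      have h3 : 2 ^ p ≤ q ^ p := Nat.pow_le_pow_left hq2 p
      rw [← h1]
      simpa using lt_of_lt_of_le h2 h3
    · rw [← h1]
      simpa using pow_pos hp.pos 1
  · -- r ≥ 2
    set s : ℕ := r - 1 with hs_def
    have hs1 : 1 ≤ s := by omega
    have hsr : s < r := by omega
    -- key irrationality fact
    have hzero : ∀ m n : ℤ, (m : ℝ) * a = (n : ℝ) * b → m = 0 := by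
      intro m n hmn
      by_contra hm
      have hn : n ≠ 0 := by
        rintro rfl
        simp only [Int.cast_zero, zero_mul, mul_eq_zero] at hmn
        rcases hmn with h | h
        · exact hm (by exact_mod_cast h)
        · exact ha.ne' h
      have habs : (m.natAbs : ℝ) * a = (n.natAbs : ℝ) * b := by
        have h2 := congrArg abs hmn
        rw [abs_mul, abs_mul, abs_of_pos ha, abs_of_pos hb] at h2
        rw [Nat.cast_natAbs, Nat.cast_natAbs, Int.cast_abs, Int.cast_abs]
        exact h2
      have hM : 0 < m.natAbs := Int.natAbs_pos.mpr hm
      have hN : 0 < n.natAbs := Int.natAbs_pos.mpr hn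
      have hlog : Real.log ((p : ℝ) ^ m.natAbs) = Real.log ((q : ℝ) ^ n.natAbs) := by
        rw [Real.log_pow, Real.log_pow]
        push_cast
        exact habs
      have hpq' : (p : ℝ) ^ m.natAbs = (q : ℝ) ^ n.natAbs := by
        have h1 : (0 : ℝ) < (p : ℝ) ^ m.natAbs := by positivity
        have h2 : (0 : ℝ) < (q : ℝ) ^ n.natAbs := by positivity
        exact Real.log_injOn_pos (mem_Ioi.mpr h1) (mem_Ioi.mpr h2) hlog
      have hnat : p ^ m.natAbs = q ^ n.natAbs := by exact_mod_cast hpq'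
      have hdvd : p ∣ q ^ n.natAbs := hnat ▸ dvd_pow_self p hM.ne'
      have : p = q := (Nat.prime_dvd_prime_iff_eq hp hq).mp (hp.dvd_of_dvd_pow hdvd)
      omega
    -- density of the subgroup generated by a and b
    have hdense : Dense ((AddSubgroup.closure {a, b} : AddSubgroup ℝ) : Set ℝ) := by
      rcases (AddSubgroup.closure {a, b}).dense_or_cyclic with h | ⟨c, hc⟩
      · exact h
      · exfalso
        have haS : a ∈ AddSubgroup.closure ({a, b} : Set ℝ) :=
          AddSubgroup.subset_closure (by simp)
        have hbS : b ∈ AddSubgroup.closure ({a, b} : Set ℝ) :=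
          AddSubgroup.subset_closure (by simp)
        rw [hc, AddSubgroup.mem_closure_singleton] at haS hbS
        obtain ⟨m, hm⟩ := haS
        obtain ⟨n, hn⟩ := hbS
        have key : (n : ℝ) * a = (m : ℝ) * b := by
          rw [← hm, ← hn]
          push_cast [zsmul_eq_mul]
          ring
        have hn0 : n = 0 := hzero n m key
        subst hn0
        simp only [zero_smul] at hn
        exact hb.ne' hn.symm
    -- move to the circle ℝ / bℤ
    haveI : Fact (0 < b) := ⟨hb⟩
    have hDz : Dense (Set.range ((· • (a : AddCircle b)) : ℤ → AddCircle b)) := by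
      have hsub : ((↑) : ℝ → AddCircle b) '' ((AddSubgroup.closure {a, b} : AddSubgroup ℝ) : Set ℝ)
          ⊆ Set.range ((· • (a : AddCircle b)) : ℤ → AddCircle b) := by
        rintro _ ⟨y, hy, rfl⟩
        rw [SetLike.mem_coe, AddSubgroup.mem_closure_pair] at hy
        obtain ⟨m, n, hmn⟩ := hy
        refine ⟨m, ?_⟩
        rw [← hmn]
        have h1 : ((m • a + n • b : ℝ) : AddCircle b)
            = m • (a : AddCircle b) + n • ((b : ℝ) : AddCircle b) := rfl
        rw [h1, AddCircle.coe_period, smul_zero, add_zero]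
      refine Dense.mono hsub ?_
      intro z
      obtain ⟨y, rfl⟩ := QuotientAddGroup.mk_surjective z
      have hy : y ∈ closure ((AddSubgroup.closure {a, b} : AddSubgroup ℝ) : Set ℝ) :=
        hdense y
      exact image_closure_subset_closure_image QuotientAddGroup.continuous_mk ⟨y, hy, rfl⟩
    -- the target interval
    set c : ℝ := Real.log s with hc_def
    set d : ℝ := Real.log r with hd_def
    have hc0 : 0 ≤ c := Real.log_nonneg (by exact_mod_cast hs1)
    have hcd : c < d := Real.log_lt_log (by exact_mod_cast hs1) (by exact_mod_cast hsr)
    set t : ℝ := (c + d) / 2 with ht_def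
    have htI : t ∈ Ioo c d := ⟨by simp [ht_def]; linarith, by simp [ht_def]; linarith⟩
    -- cluster point along ℕ
    have hmem : ((t : AddCircle b)) ∈ closure (Set.range ((· • (a : AddCircle b)) : ℤ → AddCircle b)) := hDz _
    have hMCP : MapClusterPt ((t : AddCircle b)) atTop ((· • (a : AddCircle b)) : ℕ → AddCircle b) :=
      ((mapClusterPt_atTop_nsmul_tfae ((t : AddCircle b)) (a : AddCircle b)).out 0 3).mpr hmem
    -- choose N with N * a > d
    obtain ⟨N0, hN0⟩ := exists_nat_gt (d / a)
    set N : ℕ := N0 + 1 with hN_def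
    have hNa : d < (N : ℝ) * a := by
      have : d / a < (N : ℝ) := by rw [hN_def]; push_cast; linarith
      calc d = (d / a) * a := by field_simp
        _ < (N : ℝ) * a := by exact mul_lt_mul_of_pos_right this ha
    -- open set
    have hUopen : IsOpen (((↑) : ℝ → AddCircle b) '' Ioo c d) :=
      QuotientAddGroup.isOpenMap_coe _ isOpen_Ioo
    have hUnhds : (((↑) : ℝ → AddCircle b) '' Ioo c d) ∈ nhds ((t : AddCircle b)) :=
      hUopen.mem_nhds ⟨t, htI, rfl⟩
    have hfreq := mapClusterPt_iff_frequently.mp hMCP _ hUnhds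
    obtain ⟨n, hnN, hnU⟩ := Filter.frequently_atTop.mp hfreq N
    obtain ⟨y, hyI, hy⟩ := hnU
    -- lift the congruence
    have hxy : ((n : ℝ) * a : ℝ) - y ∈ AddSubgroup.zmultiples b := by
      have : ((y : AddCircle b)) = (((n : ℝ) * a : ℝ) : AddCircle b) := by
        rw [hy, ← nsmul_eq_mul, AddCircle.coe_nsmul]
      exact (QuotientAddGroup.eq_iff_sub_mem.mp this.symm)
    obtain ⟨k, hk⟩ := AddSubgroup.mem_zmultiples_iff.mp hxy
    rw [zsmul_eq_mul] at hk
    -- bounds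
    have hna : d < (n : ℝ) * a := by
      have : (N : ℝ) * a ≤ (n : ℝ) * a := by
        apply mul_le_mul_of_nonneg_right _ ha.le
        exact_mod_cast hnN
      linarith
    have hyc : c < y := hyI.1
    have hyd : y < d := hyI.2
    have hkpos : 0 < (k : ℝ) * b := by linarith
    have hk1 : 1 ≤ k := by
      by_contra hk0
      push_neg at hk0
      have : (k : ℝ) ≤ 0 := by exact_mod_cast Int.lt_add_one_iff.mp (by omega)
      nlinarith
    refine ⟨n, k.toNat, by omega, by omega, ?_, ?_⟩
    · -- p ^ n < r * q ^ k
      have hcast : ((k.toNat : ℕ) : ℝ) = (k : ℝ) := by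
        exact_mod_cast Int.toNat_of_nonneg (by omega : (0:ℤ) ≤ k)
      have hlog : Real.log ((p : ℝ) ^ n) < Real.log ((r : ℝ) * (q : ℝ) ^ k.toNat) := by
        rw [Real.log_pow, Real.log_mul (by positivity) (by positivity), Real.log_pow, hcast]
        have : (n : ℝ) * a - (k : ℝ) * b = y := by linarith [hk]
        push_cast
        rw [← ha_def, ← hb_def, ← hd_def]
        nlinarith [hyd, this]
      have := Real.exp_lt_exp.mpr hlog
      rw [Real.exp_log (by positivity), Real.exp_log (by positivity)] at this
      exact_mod_cast this
    · -- (r-1) * q ^ k < p ^ n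
      have hcast : ((k.toNat : ℕ) : ℝ) = (k : ℝ) := by
        exact_mod_cast Int.toNat_of_nonneg (by omega : (0:ℤ) ≤ k)
      have hlog : Real.log ((s : ℝ) * (q : ℝ) ^ k.toNat) < Real.log ((p : ℝ) ^ n) := by
        rw [Real.log_pow, Real.log_mul (by positivity) (by positivity), Real.log_pow, hcast]
        have : (n : ℝ) * a - (k : ℝ) * b = y := by linarith [hk]
        push_cast
        rw [← ha_def, ← hb_def, ← hc_def]
        nlinarith [hyc, this]
      have := Real.exp_lt_exp.mpr hlog
      rw [Real.exp_log (by positivity), Real.exp_log ?_] at this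
      · exact_mod_cast this
      · have : (0:ℝ) < s := by exact_mod_cast hs1
        positivity
end

section
/- Let S be a finite nonempty set of primes. There exist S-units a and b such that whenever c_0, c_1, c_2 ∈ {−1, 0, 1} and c_0 + c_1·a + c_2·b is an S-unit, then (c_0, c_1, c_2) is one of the six tuples (1, 0, 0), (−1, 0, 0), (0, 1, 0), (0, −1, 0), (0, 0, 1), (0, 0, −1). -/
lemma key_pm_one (S : Finset ℕ) (n : ℤ) (hn : n ≠ 0)
    (h1 : ∀ p : ℕ, p.Prime → (p : ℤ) ∣ n → p ∈ S)
    (h2 : ∀ q ∈ S, ¬ (q : ℤ) ∣ n) : n = 1 ∨ n = -1 := by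
  have habs : n.natAbs = 1 := by
    by_contra h
    obtain ⟨p, hp, hpd⟩ := Nat.exists_prime_and_dvd h
    have hpn : (p : ℤ) ∣ n := Int.dvd_natAbs.mp (Int.natCast_dvd_natCast.mpr hpd)
    exact h2 p (h1 p hp hpn) hpn
  omega

lemma not_dvd_help (q : ℕ) (hq : 2 ≤ q) (c d : ℤ) (hc : c = 1 ∨ c = -1)
    (hd : (q : ℤ) ∣ d) : ¬ (q : ℤ) ∣ (c + d) := by
  intro h
  have hcd : (q : ℤ) ∣ c := by
    have := dvd_sub h hd
    simpa using this
  have h1 : (q : ℤ) ∣ 1 := by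
    rcases hc with rfl | rfl
    · exact hcd
    · exact (dvd_neg.mp hcd)
  have := Int.le_of_dvd one_pos h1
  omega

set_option maxHeartbeats 1000000 in
theorem stmt_15 (S : Finset ℕ) (hS : S.Nonempty) (hP : ∀ p ∈ S, p.Prime) :
    ∃ a b : ℚ, IsSUnit S a ∧ IsSUnit S b ∧
      ∀ c₀ c₁ c₂ : ℤ, c₀ ∈ ({-1, 0, 1} : Set ℤ) → c₁ ∈ ({-1, 0, 1} : Set ℤ) →
        c₂ ∈ ({-1, 0, 1} : Set ℤ) →
        IsSUnit S ((c₀ : ℚ) + (c₁ : ℚ) * a + (c₂ : ℚ) * b) →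
        (c₀, c₁, c₂) ∈ ({(1, 0, 0), (-1, 0, 0), (0, 1, 0), (0, -1, 0),
          (0, 0, 1), (0, 0, -1)} : Set (ℤ × ℤ × ℤ)) := by
  classical
  set M : ℕ := ∏ q ∈ S, q with hMdef
  obtain ⟨q0, hq0⟩ := hS
  have hMpos : 0 < M := Finset.prod_pos (fun q hq => (hP q hq).pos)
  have hM2 : 2 ≤ M :=
    le_trans (hP q0 hq0).two_le (Nat.le_of_dvd hMpos (Finset.dvd_prod_of_mem _ hq0))
  have hprimeM : ∀ p : ℕ, p.Prime → p ∣ M → p ∈ S := by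
    intro p hp hd
    obtain ⟨q, hqS, hq⟩ := (hp.prime.dvd_finset_prod_iff _).mp hd
    rwa [(Nat.prime_dvd_prime_iff_eq hp (hP q hqS)).mp hq]
  have hMQ : (M : ℚ) ≠ 0 := by positivity
  -- S-unit-ness of powers of M
  have hpow : ∀ j : ℕ, 0 < j → IsSUnit S ((M : ℚ) ^ j) := by
    intro j hj
    refine ⟨pow_ne_zero _ hMQ, ?_⟩
    intro p hp hd
    have hcast : ((M : ℚ)) ^ j = ((M ^ j : ℕ) : ℚ) := by push_cast; ring
    rw [hcast, Rat.num_natCast, Rat.den_natCast] at hd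
    rcases hd with hd | hd
    · have : p ∣ M ^ j := Int.natCast_dvd_natCast.mp hd
      exact hprimeM p hp (hp.dvd_of_dvd_pow this)
    · exact absurd (Nat.dvd_one.mp hd) hp.ne_one
  refine ⟨(M : ℚ) ^ 2, (M : ℚ) ^ 4, hpow 2 (by norm_num), hpow 4 (by norm_num), ?_⟩
  intro c₀ c₁ c₂ h0 h1 h2 hU
  simp only [Set.mem_insert_iff, Set.mem_singleton_iff] at h0 h1 h2
  simp only [Set.mem_insert_iff, Set.mem_singleton_iff, Prod.mk.injEq]
  have hcast : ((c₀ : ℚ) + (c₁ : ℚ) * (M : ℚ) ^ 2 + (c₂ : ℚ) * (M : ℚ) ^ 4)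
      = ((c₀ + c₁ * (M : ℤ) ^ 2 + c₂ * (M : ℤ) ^ 4 : ℤ) : ℚ) := by push_cast; ring
  rw [hcast] at hU
  have hn0 : c₀ + c₁ * (M : ℤ) ^ 2 + c₂ * (M : ℤ) ^ 4 ≠ 0 := by
    intro h
    exact hU.1 (by rw [h]; norm_num)
  have hdvd : ∀ p : ℕ, p.Prime → (p : ℤ) ∣ (c₀ + c₁ * (M : ℤ) ^ 2 + c₂ * (M : ℤ) ^ 4) → p ∈ S := by
    intro p hp hd
    exact hU.2 p hp (Or.inl (by rwa [Rat.num_intCast]))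
  have hqM : ∀ q ∈ S, (q : ℤ) ∣ (M : ℤ) := fun q hq =>
    Int.natCast_dvd_natCast.mpr (Finset.dvd_prod_of_mem _ hq)
  have hMZ : (2 : ℤ) ≤ (M : ℤ) := by exact_mod_cast hM2
  have hm2 : (4 : ℤ) ≤ (M : ℤ) ^ 2 := by nlinarith
  have hm4 : 4 * (M : ℤ) ^ 2 ≤ (M : ℤ) ^ 4 := by nlinarith
  by_cases hc0 : c₀ = 0
  · subst hc0
    by_cases hc2 : c₂ = 0
    · subst hc2
      have hc1 : c₁ = 1 ∨ c₁ = -1 := by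
        rcases h1 with h | h | h
        · right; exact h
        · exfalso; apply hn0; rw [h]; ring
        · left; exact h
      omega
    · by_cases hc1 : c₁ = 0
      · subst hc1
        omega
      · -- n = M^2 * (c₁ + c₂ M^2), derive False
        exfalso
        have hc1' : c₁ = 1 ∨ c₁ = -1 := by omega
        have hc2' : c₂ = 1 ∨ c₂ = -1 := by omega
        have hdvd' : ∀ p : ℕ, p.Prime → (p : ℤ) ∣ (c₁ + c₂ * (M : ℤ) ^ 2) → p ∈ S := by
          intro p hp hd
          refine hdvd p hp ?_
          have : (0 : ℤ) + c₁ * (M : ℤ) ^ 2 + c₂ * (M : ℤ) ^ 4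
              = (M : ℤ) ^ 2 * (c₁ + c₂ * (M : ℤ) ^ 2) := by ring
          rw [this]
          exact hd.mul_left _
        have hcop' : ∀ q ∈ S, ¬ (q : ℤ) ∣ (c₁ + c₂ * (M : ℤ) ^ 2) := by
          intro q hq
          exact not_dvd_help q (hP q hq).two_le c₁ (c₂ * (M : ℤ) ^ 2) hc1'
            ((dvd_pow (hqM q hq) two_ne_zero).mul_left c₂)
        have hn'0 : c₁ + c₂ * (M : ℤ) ^ 2 ≠ 0 := by
          rcases hc1' with rfl | rfl <;> rcases hc2' with rfl | rfl <;> nlinarith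
        have hpm' := key_pm_one S _ hn'0 hdvd' hcop'
        rcases hc1' with rfl | rfl <;> rcases hc2' with rfl | rfl <;>
          rcases hpm' with h | h <;> nlinarith
  · -- c₀ = ±1
    have hc0' : c₀ = 1 ∨ c₀ = -1 := by omega
    have hcop : ∀ q ∈ S, ¬ (q : ℤ) ∣ (c₀ + c₁ * (M : ℤ) ^ 2 + c₂ * (M : ℤ) ^ 4) := by
      intro q hq
      have hd2 : (q : ℤ) ∣ c₁ * (M : ℤ) ^ 2 + c₂ * (M : ℤ) ^ 4 :=
        dvd_add ((dvd_pow (hqM q hq) two_ne_zero).mul_left c₁)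
          ((dvd_pow (hqM q hq) (by norm_num)).mul_left c₂)
      have h' := not_dvd_help q (hP q hq).two_le c₀ _ hc0' hd2
      rw [show c₀ + c₁ * (M : ℤ) ^ 2 + c₂ * (M : ℤ) ^ 4
          = c₀ + (c₁ * (M : ℤ) ^ 2 + c₂ * (M : ℤ) ^ 4) by ring]
      exact h'
    have hpm := key_pm_one S _ hn0 hdvd hcop
    have hc12 : c₁ = 0 ∧ c₂ = 0 := by
      rcases hc0' with rfl | rfl <;> rcases h1 with rfl | rfl | rfl <;>
        rcases h2 with rfl | rfl | rfl <;> rcases hpm with h | h <;>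
        constructor <;> linarith
    omega
end

section
/- Let S be a finite nonempty set of primes and let R be a finite set of rational numbers. Then there exists an S-unit a such that a ∉ R and such that for all v, w ∈ R, if a + v − w is an S-unit then v = w. -/
/-- A nonzero natural whose prime factors lie in `S` with exponents bounded by `K`
is at most `(∏ p ∈ S, p)^K`. -/
lemma smooth_bound (S : Finset ℕ) (hP : ∀ p ∈ S, p.Prime) (n : ℕ) (hn : n ≠ 0) (K : ℕ)
    (hfac : ∀ q : ℕ, q.Prime → q ∣ n → q ∈ S)
    (hexp : ∀ ℓ ∈ S, n.factorization ℓ ≤ K) :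
    n ≤ (∏ p ∈ S, p) ^ K := by
  have hsupp : n.factorization.support ⊆ S := by
    intro q hq
    rw [Nat.support_factorization, Nat.mem_primeFactors] at hq
    exact hfac q hq.1 hq.2.1
  calc n = ∏ p ∈ n.factorization.support, p ^ n.factorization p := by
        conv_lhs => rw [← Nat.factorization_prod_pow_eq_self hn]
        rfl
    _ ≤ ∏ p ∈ S, p ^ n.factorization p := by
        apply Finset.prod_le_prod_of_subset_of_one_le' hsupp
        intro i hi _
        exact Nat.one_le_iff_ne_zero.2 (pow_ne_zero _ (hP i hi).ne_zero)
    _ ≤ ∏ p ∈ S, p ^ K := by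
        apply Finset.prod_le_prod'
        intro i hi
        exact Nat.pow_le_pow_right (hP i hi).pos (hexp i hi)
    _ = (∏ p ∈ S, p) ^ K := by rw [Finset.prod_pow]

/-- The valuation of a rational is at most the absolute value of its numerator. -/
lemma padicValRat_le_num (p : ℕ) (q : ℚ) : padicValRat p q ≤ (q.num.natAbs : ℤ) := by
  have h1 : padicValInt p q.num = padicValNat p q.num.natAbs := rfl
  have h2 : padicValNat p q.num.natAbs ≤ q.num.natAbs :=
    le_trans (padicValNat_le_nat_log _) (Nat.log_le_self _ _)
  rw [padicValRat_def, h1]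
  omega

/-- A rational's absolute value is at most its numerator's absolute value. -/
lemma abs_le_num (q : ℚ) : |q| ≤ (q.num.natAbs : ℚ) := by
  have hd : (1:ℚ) ≤ |(q.den:ℚ)| := by
    rw [abs_of_pos (by exact_mod_cast q.pos)]
    exact_mod_cast q.pos
  have h1 : |q| ≤ |(q.num : ℚ)| := by
    conv_lhs => rw [← Rat.num_div_den q]
    rw [abs_div]
    exact div_le_self (abs_nonneg _) hd
  rw [Nat.cast_natAbs]
  exact_mod_cast h1


/-- Each prime in `S` has valuation exactly `1` in the product of the primes of `S`. -/
lemma padicValNat_prod_primes (S : Finset ℕ) (hP : ∀ p ∈ S, p.Prime) {ℓ : ℕ} (hℓ : ℓ ∈ S) :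
    padicValNat ℓ (∏ p ∈ S, p) = 1 := by
  have hne : ∀ p ∈ S, p ≠ 0 := fun p hp => (hP p hp).ne_zero
  have hfac := Nat.factorization_prod (g := id) hne
  have h1 : (∏ p ∈ S, p).factorization ℓ = 1 := by
    rw [show (∏ p ∈ S, p) = ∏ p ∈ S, id p from rfl, hfac]
    rw [Finset.sum_apply']
    rw [Finset.sum_congr rfl (fun p hp => by
      rw [show (id p : ℕ).factorization = Finsupp.single p 1 from
        (hP p hp).factorization, Finsupp.single_apply])]
    rw [Finset.sum_ite_eq' S ℓ (fun _ => 1), if_pos hℓ]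
  rw [← Nat.factorization_def _ (hP ℓ hℓ)]
  exact h1

theorem stmt_16 (S : Finset ℕ) (hS : S.Nonempty) (hP : ∀ p ∈ S, p.Prime)
    (R : Finset ℚ) :
    ∃ a : ℚ, IsSUnit S a ∧ a ∉ R ∧
      ∀ v ∈ R, ∀ w ∈ R, IsSUnit S (a + v - w) → v = w := by
  classical
  obtain ⟨p₀, hp₀⟩ := hS
  set P : ℕ := ∏ p ∈ S, p with hPdef
  have hP2 : 2 ≤ P :=
    le_trans (hP p₀ hp₀).two_le (Finset.single_le_prod' (fun i hi => (hP i hi).one_le) hp₀)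
  have hPpos : 0 < P := by omega
  set K : ℕ := (R ×ˢ R).sup (fun vw => (vw.1 - vw.2).num.natAbs) with hK
  set RB : ℕ := R.sup (fun r => r.num.natAbs) with hRBdef
  set N : ℕ := P ^ K + K + RB + 1 with hNdef
  have hNbig : P ^ K + K + RB + 1 ≤ P ^ N := by
    calc P ^ K + K + RB + 1 = N := rfl
      _ ≤ 2 ^ N := (Nat.lt_two_pow_self (n := N)).le
      _ ≤ P ^ N := Nat.pow_le_pow_left hP2 N
  set a : ℚ := ((P ^ N : ℕ) : ℚ) with ha
  have hanum : a.num = ((P ^ N : ℕ) : ℤ) := Rat.num_natCast _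
  have haden : a.den = 1 := Rat.den_natCast _
  have hapos : 0 < a := by
    rw [ha]
    exact_mod_cast pow_pos hPpos N
  have ha0 : a ≠ 0 := ne_of_gt hapos
  have haU : IsSUnit S a := by
    refine ⟨ha0, ?_⟩
    intro q hq hdvd
    rcases hdvd with h | h
    · rw [hanum] at h
      have h' : q ∣ P ^ N := by exact_mod_cast h
      obtain ⟨p, hpS, hqp⟩ := hq.prime.exists_mem_finset_dvd (hq.dvd_of_dvd_pow h')
      rwa [(Nat.prime_dvd_prime_iff_eq hq (hP p hpS)).1 hqp]
    · rw [haden] at h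
      exact absurd (Nat.dvd_one.1 h) hq.ne_one
  have habs : ∀ r ∈ R, |r| ≤ (RB : ℚ) := by
    intro r hr
    refine le_trans (abs_le_num r) ?_
    exact_mod_cast Finset.le_sup (f := fun r : ℚ => r.num.natAbs) hr
  have haRB : (RB : ℚ) < a := by
    rw [ha]
    exact_mod_cast (by omega : RB < P ^ N)
  have hanotR : a ∉ R := by
    intro hmem
    have := le_trans (le_abs_self a) (habs a hmem)
    linarith
  refine ⟨a, haU, hanotR, ?_⟩
  intro v hv w hw hu
  by_contra hvw
  set d : ℚ := v - w with hd
  have hd0 : d ≠ 0 := sub_ne_zero.2 hvw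
  have hu' : IsSUnit S (a + d) := by rw [hd, ← add_sub_assoc]; exact hu
  have hu0 : a + d ≠ 0 := hu'.1
  have hdK : d.num.natAbs ≤ K := by
    rw [hd, hK]
    exact Finset.le_sup (f := fun vw : ℚ × ℚ => (vw.1 - vw.2).num.natAbs)
      (show (v, w) ∈ R ×ˢ R from Finset.mem_product.2 ⟨hv, hw⟩)
  have hdabs : |d| ≤ (K : ℚ) := le_trans (abs_le_num d) (by exact_mod_cast hdK)
  have hvalA : ∀ ℓ ∈ S, padicValRat ℓ a = (N : ℤ) := by
    intro ℓ hℓ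
    haveI : Fact ℓ.Prime := ⟨hP ℓ hℓ⟩
    rw [ha, ← padicValRat_of_nat, padicValNat.pow _ N,
      padicValNat_prod_primes S hP hℓ, mul_one]
  have hval : ∀ ℓ ∈ S, padicValRat ℓ (a + d) = padicValRat ℓ d := by
    intro ℓ hℓ
    haveI : Fact ℓ.Prime := ⟨hP ℓ hℓ⟩
    have hvald : padicValRat ℓ d < padicValRat ℓ a := by
      rw [hvalA ℓ hℓ]
      calc padicValRat ℓ d ≤ (d.num.natAbs : ℤ) := padicValRat_le_num ℓ d
        _ ≤ (K : ℤ) := by exact_mod_cast hdK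
        _ < (N : ℤ) := by exact_mod_cast (by omega : K < N)
    have h := padicValRat.add_eq_of_lt (p := ℓ)
      (show d + a ≠ 0 by rwa [add_comm]) hd0 ha0 hvald
    rwa [add_comm] at h
  have hnum0 : (a + d).num.natAbs ≠ 0 := by
    simpa [Int.natAbs_eq_zero, Rat.num_eq_zero] using hu0
  have hnum_fac : ∀ q : ℕ, q.Prime → q ∣ (a + d).num.natAbs → q ∈ S := by
    intro q hq hdvd
    exact hu'.2 q hq (Or.inl (Int.natCast_dvd.2 hdvd))
  have hexp : ∀ ℓ ∈ S, (a + d).num.natAbs.factorization ℓ ≤ K := by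
    intro ℓ hℓ
    haveI : Fact ℓ.Prime := ⟨hP ℓ hℓ⟩
    by_cases hden : ℓ ∣ (a + d).den
    · have hnd : ¬ ℓ ∣ (a + d).num.natAbs := by
        intro hc
        have h1 : ℓ ∣ 1 := (a + d).reduced ▸ Nat.dvd_gcd hc hden
        exact (hP ℓ hℓ).ne_one (Nat.dvd_one.1 h1)
      rw [Nat.factorization_eq_zero_of_not_dvd hnd]
      exact Nat.zero_le K
    · have hden0 : padicValNat ℓ (a + d).den = 0 := padicValNat.eq_zero_of_not_dvd hden
      have h1 : padicValRat ℓ (a + d) = ((a + d).num.natAbs.factorization ℓ : ℤ) := by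
        rw [padicValRat_def, hden0, Nat.factorization_def _ (hP ℓ hℓ)]
        simp [padicValInt]
      have h3 : padicValRat ℓ d ≤ (K : ℤ) :=
        le_trans (padicValRat_le_num ℓ d) (by exact_mod_cast hdK)
      have h4 : ((a + d).num.natAbs.factorization ℓ : ℤ) ≤ (K : ℤ) := by
        rw [← h1, hval ℓ hℓ]; exact h3
      exact_mod_cast h4
  have hnum_le : (a + d).num.natAbs ≤ P ^ K := smooth_bound S hP _ hnum0 K hnum_fac hexp
  have habs_u : |a + d| ≤ ((P ^ K : ℕ) : ℚ) :=
    le_trans (abs_le_num _) (by exact_mod_cast hnum_le)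
  have hsplit : a ≤ |a + d| + |d| := by
    have h5 : a = (a + d) - d := by ring
    calc a = |a| := (abs_of_pos hapos).symm
      _ = |(a + d) - d| := by rw [← h5]
      _ ≤ |a + d| + |d| := abs_sub _ _
  have hcast : ((P ^ K : ℕ) : ℚ) + (K : ℚ) < a := by
    rw [ha]
    exact_mod_cast (by omega : P ^ K + K < P ^ N)
  linarith
end
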